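/- arXiv:2103.13056 — 7 statements merged into one kernel-verified Lean document; each statement's English description precedes it below -/
import Mathlib

section
/- (Freedman's inequality.) Let (Ω, ℱ, P) be a probability space with a filtration {ℱ_t}_{t≥0}, and let {X_t}_{t≥1} be a real-valued martingale difference sequence adapted to {ℱ_t}, i.e., each X_t is ℱ_t-measurable and E[X_t | ℱ_{t−1}] = 0 almost surely. Suppose |X_t| ≤ R almost surely for all t, for some real R > 0. Then for every T ∈ ℕ, every δ ∈ (0,1), and every η ∈ (0, 1/R), with probability at least 1 − δ it holds that Σ_{t=1}^T X_t ≤ η Σ_{t=1}^T E[X_t² | ℱ_{t−1}] + log(1/δ)/η. -/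
open MeasureTheory Finset


lemma exp_le_one_add_self_add_sq {x : ℝ} (hx : x ≤ 1) : Real.exp x ≤ 1 + x + x ^ 2 := by
  rcases le_or_gt x (-1) with h | h
  · have h1 : Real.exp x ≤ 1 := by
      rw [show (1:ℝ) = Real.exp 0 from Real.exp_zero.symm]
      exact Real.exp_le_exp.2 (by linarith)
    nlinarith
  · have habs : |x| ≤ 1 := abs_le.2 ⟨h.le, hx⟩
    have hb := Real.exp_bound habs (n := 2) (by norm_num)
    have hsum : ∑ m ∈ Finset.range 2, x ^ m / m.factorial = 1 + x := by
      simp [Finset.sum_range_succ, Nat.factorial]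
    rw [hsum] at hb
    have h2 : Real.exp x - (1 + x) ≤ |x| ^ 2 := by
      have := (abs_sub_le_iff.1 hb).1
      have h3 : ((2:ℕ).succ : ℝ) / ((2:ℕ).factorial * 2) ≤ 1 := by
        norm_num [Nat.factorial]
      nlinarith [sq_nonneg (|x|), abs_nonneg x, pow_nonneg (abs_nonneg x) 2]
    rw [sq_abs] at h2
    nlinarith [sq_nonneg x]

section Aux

variable {Ω : Type*} {m0 : MeasurableSpace Ω} {P : Measure Ω}
    [IsProbabilityMeasure P] (ℱ : Filtration ℕ m0)
    (X : ℕ → Ω → ℝ) (R : ℝ)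

/-- Integrability of the exponential process. -/
lemma freedman_int (hR : 0 < R)
    (hadapt : ∀ t, 1 ≤ t → StronglyMeasurable[ℱ t] (X t))
    (hbdd : ∀ t, 1 ≤ t → ∀ᵐ ω ∂P, |X t ω| ≤ R)
    (η : ℝ) (hη0 : 0 < η) (A B : ℕ) :
    Integrable (fun ω => Real.exp (η * ∑ t ∈ Icc 1 A, X t ω
      - η ^ 2 * ∑ t ∈ Icc 1 B, (P[fun ω' => (X t ω') ^ 2 | ℱ (t - 1)]) ω)) P := by
  have hSmeas : StronglyMeasurable (fun ω => ∑ t ∈ Icc 1 A, X t ω) :=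
    Finset.stronglyMeasurable_fun_sum _ fun t ht =>
      ((hadapt t (mem_Icc.mp ht).1).mono (ℱ.le t))
  have hVmeas : StronglyMeasurable
      (fun ω => ∑ t ∈ Icc 1 B, (P[fun ω' => (X t ω') ^ 2 | ℱ (t - 1)]) ω) :=
    Finset.stronglyMeasurable_fun_sum _ fun t _ =>
      (stronglyMeasurable_condExp.mono (ℱ.le (t - 1)))
  have hmeas : StronglyMeasurable (fun ω => Real.exp (η * ∑ t ∈ Icc 1 A, X t ω
      - η ^ 2 * ∑ t ∈ Icc 1 B, (P[fun ω' => (X t ω') ^ 2 | ℱ (t - 1)]) ω)) :=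
    Real.continuous_exp.comp_stronglyMeasurable
      ((hSmeas.const_mul η).sub (hVmeas.const_mul (η ^ 2)))
  refine (integrable_const (Real.exp (η * (A * R)))).mono' hmeas.aestronglyMeasurable ?_
  have h1 : ∀ᵐ ω ∂P, ∀ t ∈ Icc 1 A, |X t ω| ≤ R := by
    rw [Filter.eventually_all_finset]
    intro t ht
    exact hbdd t (mem_Icc.mp ht).1
  have h2 : ∀ᵐ ω ∂P, ∀ t ∈ Icc 1 B, 0 ≤ (P[fun ω' => (X t ω') ^ 2 | ℱ (t - 1)]) ω := by
    rw [Filter.eventually_all_finset]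
    intro t _
    exact condExp_nonneg (ae_of_all _ fun ω' => sq_nonneg _)
  filter_upwards [h1, h2] with ω h1 h2
  rw [Real.norm_eq_abs, abs_of_pos (Real.exp_pos _), Real.exp_le_exp]
  have hS : ∑ t ∈ Icc 1 A, X t ω ≤ A * R := by
    calc ∑ t ∈ Icc 1 A, X t ω ≤ ∑ _t ∈ Icc 1 A, R :=
          Finset.sum_le_sum fun t ht => (abs_le.mp (h1 t ht)).2
      _ = (A : ℝ) * R := by
          rw [Finset.sum_const, nsmul_eq_mul]
          congr 1
          norm_cast
          simp [Nat.card_Icc]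
  have hV : 0 ≤ ∑ t ∈ Icc 1 B, (P[fun ω' => (X t ω') ^ 2 | ℱ (t - 1)]) ω :=
    Finset.sum_nonneg h2
  nlinarith [mul_le_mul_of_nonneg_left hS hη0.le, mul_nonneg (sq_nonneg η) hV]


/-- The exponential process has expectation at most one. -/
lemma freedman_exp_le_one (hR : 0 < R)
    (hadapt : ∀ t, 1 ≤ t → StronglyMeasurable[ℱ t] (X t))
    (hmds : ∀ t, 1 ≤ t → P[X t | ℱ (t - 1)] =ᵐ[P] 0)
    (hbdd : ∀ t, 1 ≤ t → ∀ᵐ ω ∂P, |X t ω| ≤ R)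
    (η : ℝ) (hη0 : 0 < η) (hη1 : η < 1 / R) : ∀ T : ℕ,
    ∫ ω, Real.exp (η * ∑ t ∈ Icc 1 T, X t ω
      - η ^ 2 * ∑ t ∈ Icc 1 T, (P[fun ω' => (X t ω') ^ 2 | ℱ (t - 1)]) ω) ∂P ≤ 1 := by
  have hηR : η * R < 1 := (lt_div_iff₀ hR).mp hη1
  have hXm : ∀ t, 1 ≤ t → StronglyMeasurable (X t) := fun t ht => (hadapt t ht).mono (ℱ.le t)
  have hXint : ∀ t, 1 ≤ t → Integrable (X t) P := fun t ht =>
    (integrable_const R).mono' (hXm t ht).aestronglyMeasurable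
      (by filter_upwards [hbdd t ht] with ω h using by simpa using h)
  have hX2int : ∀ t, 1 ≤ t → Integrable (fun ω => X t ω ^ 2) P := by
    intro t ht
    have hm2 : StronglyMeasurable (fun ω => X t ω ^ 2) := by
      have := (hXm t ht).mul (hXm t ht)
      simp only [sq]; exact this
    refine (integrable_const (R ^ 2)).mono' hm2.aestronglyMeasurable ?_
    filter_upwards [hbdd t ht] with ω h
    rw [Real.norm_eq_abs, abs_pow]
    exact pow_le_pow_left₀ (abs_nonneg _) h 2
  intro T
  induction T with
  | zero =>
    rw [show Icc 1 0 = (∅ : Finset ℕ) from Finset.Icc_eq_empty (by omega)]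
    simp
  | succ T ih =>
    have hT1 : (1:ℕ) ≤ T + 1 := by omega
    set f : Ω → ℝ := fun ω => Real.exp (η * ∑ t ∈ Icc 1 T, X t ω
      - η ^ 2 * ∑ t ∈ Icc 1 (T+1), (P[fun ω' => (X t ω') ^ 2 | ℱ (t - 1)]) ω) with hfdef
    set h : Ω → ℝ := fun ω => Real.exp (η * X (T+1) ω) with hhdef
    have hfh_eq : (fun ω => Real.exp (η * ∑ t ∈ Icc 1 (T+1), X t ω
        - η ^ 2 * ∑ t ∈ Icc 1 (T+1), (P[fun ω' => (X t ω') ^ 2 | ℱ (t - 1)]) ω))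
        = f * h := by
      funext ω
      rw [hfdef, hhdef]
      show _ = Real.exp _ * Real.exp _
      rw [← Real.exp_add, Finset.sum_Icc_succ_top hT1 (fun t => X t ω)]
      congr 1
      ring
    -- measurability of f with respect to ℱ T
    have hSmeasT : StronglyMeasurable[ℱ T] (fun ω => ∑ t ∈ Icc 1 T, X t ω) :=
      Finset.stronglyMeasurable_fun_sum _ fun t ht =>
        (hadapt t (mem_Icc.mp ht).1).mono (ℱ.mono (mem_Icc.mp ht).2)
    have hVmeasT : StronglyMeasurable[ℱ T]
        (fun ω => ∑ t ∈ Icc 1 (T+1), (P[fun ω' => (X t ω') ^ 2 | ℱ (t - 1)]) ω) :=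
      Finset.stronglyMeasurable_fun_sum _ fun t ht =>
        stronglyMeasurable_condExp.mono (ℱ.mono (by
          have := (mem_Icc.mp ht).2; omega))
    have hfm : StronglyMeasurable[ℱ T] f :=
      Real.continuous_exp.comp_stronglyMeasurable
        ((hSmeasT.const_mul η).sub (hVmeasT.const_mul (η ^ 2)))
    -- integrability
    have hfh_int : Integrable (f * h) P := by
      rw [← hfh_eq]
      exact freedman_int ℱ X R hR hadapt hbdd η hη0 (T+1) (T+1)
    have hh_int : Integrable h P := by
      refine (integrable_const (Real.exp (η * R))).mono'
        (Real.continuous_exp.comp_stronglyMeasurable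
          ((hXm (T+1) hT1).const_mul η)).aestronglyMeasurable ?_
      filter_upwards [hbdd (T+1) hT1] with ω hb
      rw [hhdef]
      show |Real.exp (η * X (T+1) ω)| ≤ _
      rw [abs_of_pos (Real.exp_pos _), Real.exp_le_exp]
      nlinarith [le_abs_self (X (T+1) ω)]
    -- pull-out property
    have hpull : P[f * h | ℱ T] =ᵐ[P] f * P[h | ℱ T] :=
      condExp_mul_of_stronglyMeasurable_left hfm hfh_int hh_int
    -- bound the conditional expectation of h
    set q : Ω → ℝ := fun ω => 1 + η * X (T+1) ω + η ^ 2 * X (T+1) ω ^ 2 with hqdef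
    have hq1int : Integrable (fun ω => 1 + η * X (T+1) ω) P :=
      (integrable_const 1).add ((hXint (T+1) hT1).const_mul η)
    have hq2int : Integrable (fun ω => η ^ 2 * X (T+1) ω ^ 2) P :=
      (hX2int (T+1) hT1).const_mul (η ^ 2)
    have hq_int : Integrable q P := hq1int.add hq2int
    have hh_le_q : h ≤ᵐ[P] q := by
      filter_upwards [hbdd (T+1) hT1] with ω hb
      have hx1 : η * X (T+1) ω ≤ 1 := by
        nlinarith [le_abs_self (X (T+1) ω), hη0.le, (abs_le.mp hb).2]
      have h2 := exp_le_one_add_self_add_sq hx1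
      rw [mul_pow] at h2
      exact h2
    have hcond_mono : P[h | ℱ T] ≤ᵐ[P] P[q | ℱ T] := condExp_mono hh_int hq_int hh_le_q
    have e1 : P[q | ℱ T] =ᵐ[P] P[(fun ω => 1 + η * X (T+1) ω) | ℱ T]
        + P[(fun ω => η ^ 2 * X (T+1) ω ^ 2) | ℱ T] := condExp_add hq1int hq2int (ℱ T)
    have e3 : P[(fun ω => 1 + η * X (T+1) ω) | ℱ T] =ᵐ[P] P[(fun _ => (1:ℝ)) | ℱ T]
        + P[(fun ω => η * X (T+1) ω) | ℱ T] :=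
      condExp_add (integrable_const 1) ((hXint (T+1) hT1).const_mul η) (ℱ T)
    have e4 : P[(fun ω => η * X (T+1) ω) | ℱ T] =ᵐ[P] fun ω => η * (P[X (T+1) | ℱ T]) ω :=
      condExp_smul η (X (T+1)) (ℱ T)
    have e2 : P[(fun ω => η ^ 2 * X (T+1) ω ^ 2) | ℱ T] =ᵐ[P]
        fun ω => η ^ 2 * (P[fun ω' => X (T+1) ω' ^ 2 | ℱ T]) ω :=
      condExp_smul (η ^ 2) (fun ω => X (T+1) ω ^ 2) (ℱ T)
    have e6 : P[X (T+1) | ℱ T] =ᵐ[P] 0 := hmds (T+1) hT1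
    have hGnn : ∀ᵐ ω ∂P, 0 ≤ (P[fun ω' => X (T+1) ω' ^ 2 | ℱ T]) ω :=
      condExp_nonneg (ae_of_all _ fun ω' => sq_nonneg _)
    have hle : P[f * h | ℱ T] ≤ᵐ[P] fun ω => Real.exp (η * ∑ t ∈ Icc 1 T, X t ω
        - η ^ 2 * ∑ t ∈ Icc 1 T, (P[fun ω' => (X t ω') ^ 2 | ℱ (t - 1)]) ω) := by
      filter_upwards [hpull, hcond_mono, e1, e3, e4, e2, e6, hGnn] with ω w1 w2 w3 w4 w5 w6 w7 w8
      simp only [Pi.add_apply, Pi.mul_apply, Pi.zero_apply] at w1 w2 w3 w4 w5 w6 w7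
      rw [w1]
      have hcond_le : (P[h | ℱ T]) ω ≤ Real.exp (η ^ 2 * (P[fun ω' => X (T+1) ω' ^ 2 | ℱ T]) ω) := by
        have hq_val : (P[q | ℱ T]) ω
            = 1 + η ^ 2 * (P[fun ω' => X (T+1) ω' ^ 2 | ℱ T]) ω := by
          rw [w3, w4, w5, w6, w7, condExp_const (ℱ.le T)]
          ring
        have := Real.add_one_le_exp (η ^ 2 * (P[fun ω' => X (T+1) ω' ^ 2 | ℱ T]) ω)
        calc (P[h | ℱ T]) ω ≤ (P[q | ℱ T]) ω := w2
          _ = 1 + η ^ 2 * (P[fun ω' => X (T+1) ω' ^ 2 | ℱ T]) ω := hq_val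
          _ ≤ Real.exp (η ^ 2 * (P[fun ω' => X (T+1) ω' ^ 2 | ℱ T]) ω) := by linarith
      calc f ω * (P[h | ℱ T]) ω
          ≤ f ω * Real.exp (η ^ 2 * (P[fun ω' => X (T+1) ω' ^ 2 | ℱ T]) ω) := by
            apply mul_le_mul_of_nonneg_left hcond_le (Real.exp_pos _).le
        _ = Real.exp (η * ∑ t ∈ Icc 1 T, X t ω
            - η ^ 2 * ∑ t ∈ Icc 1 T, (P[fun ω' => (X t ω') ^ 2 | ℱ (t - 1)]) ω) := by
            rw [hfdef]
            show Real.exp _ * Real.exp _ = _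
            rw [← Real.exp_add]
            congr 1
            rw [Finset.sum_Icc_succ_top hT1
              (fun t => (P[fun ω' => (X t ω') ^ 2 | ℱ (t - 1)]) ω)]
            have : (P[fun ω' => X (T+1) ω' ^ 2 | ℱ (T + 1 - 1)]) ω
                = (P[fun ω' => X (T+1) ω' ^ 2 | ℱ T]) ω := rfl
            rw [this]
            ring
    calc ∫ ω, Real.exp (η * ∑ t ∈ Icc 1 (T+1), X t ω
          - η ^ 2 * ∑ t ∈ Icc 1 (T+1), (P[fun ω' => (X t ω') ^ 2 | ℱ (t - 1)]) ω) ∂P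
        = ∫ ω, (P[f * h | ℱ T]) ω ∂P := by
          rw [integral_condExp (ℱ.le T), hfh_eq]
      _ ≤ ∫ ω, Real.exp (η * ∑ t ∈ Icc 1 T, X t ω
          - η ^ 2 * ∑ t ∈ Icc 1 T, (P[fun ω' => (X t ω') ^ 2 | ℱ (t - 1)]) ω) ∂P :=
          integral_mono_ae integrable_condExp (freedman_int ℱ X R hR hadapt hbdd η hη0 T T) hle
      _ ≤ 1 := ih

end Aux


/-- Freedman's inequality: if `{X_t}_{t ≥ 1}` is a martingale difference sequence adapted to
the filtration `ℱ` with `|X_t| ≤ R` a.s., then for any `T`, `δ ∈ (0,1)` and `η ∈ (0, 1/R)`,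
with probability at least `1 − δ`,
`∑_{t=1}^T X_t ≤ η ∑_{t=1}^T E[X_t² | ℱ_{t−1}] + log(1/δ)/η`. -/
theorem freedman_inequality {Ω : Type*} {m0 : MeasurableSpace Ω} {P : Measure Ω}
    [IsProbabilityMeasure P] (ℱ : Filtration ℕ m0)
    (X : ℕ → Ω → ℝ) (R : ℝ) (hR : 0 < R)
    (hadapt : ∀ t, 1 ≤ t → StronglyMeasurable[ℱ t] (X t))
    (hmds : ∀ t, 1 ≤ t → P[X t | ℱ (t - 1)] =ᵐ[P] 0)
    (hbdd : ∀ t, 1 ≤ t → ∀ᵐ ω ∂P, |X t ω| ≤ R)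
    (T : ℕ) (δ : ℝ) (hδ0 : 0 < δ) (hδ1 : δ < 1)
    (η : ℝ) (hη0 : 0 < η) (hη1 : η < 1 / R) :
    ENNReal.ofReal (1 - δ) ≤
      P {ω | ∑ t ∈ Icc 1 T, X t ω ≤
        η * ∑ t ∈ Icc 1 T, (P[fun ω' => (X t ω') ^ 2 | ℱ (t - 1)]) ω
          + Real.log (1 / δ) / η} := by
  set M : Ω → ℝ := fun ω => Real.exp (η * ∑ t ∈ Icc 1 T, X t ω
    - η ^ 2 * ∑ t ∈ Icc 1 T, (P[fun ω' => (X t ω') ^ 2 | ℱ (t - 1)]) ω) with hMdef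
  have key : ∫ ω, M ω ∂P ≤ 1 :=
    freedman_exp_le_one ℱ X R hR hadapt hmds hbdd η hη0 hη1 T
  have hMint : Integrable M P := freedman_int ℱ X R hR hadapt hbdd η hη0 T T
  have hMmeas : StronglyMeasurable M := by
    refine Real.continuous_exp.comp_stronglyMeasurable ?_
    refine StronglyMeasurable.sub ?_ ?_
    · exact (Finset.stronglyMeasurable_fun_sum _ fun t ht =>
        (hadapt t (mem_Icc.mp ht).1).mono (ℱ.le t)).const_mul η
    · exact (Finset.stronglyMeasurable_fun_sum _ fun t _ =>
        stronglyMeasurable_condExp.mono (ℱ.le (t - 1))).const_mul (η ^ 2)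
  have hδinv : 0 < 1 / δ := by positivity
  have markov : 1 / δ * (P {ω | 1 / δ ≤ M ω}).toReal ≤ ∫ ω, M ω ∂P :=
    mul_meas_ge_le_integral_of_nonneg
      (ae_of_all P fun ω => (Real.exp_pos _).le) hMint (1 / δ)
  have htoReal : (P {ω | 1 / δ ≤ M ω}).toReal ≤ δ := by
    have h0 : (0:ℝ) ≤ (P {ω | 1 / δ ≤ M ω}).toReal := ENNReal.toReal_nonneg
    have hc : 1 / δ * δ = 1 := by field_simp
    nlinarith [le_trans markov key, hδinv]
  have hAmeas : MeasurableSet {ω | 1 / δ ≤ M ω} :=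
    measurableSet_le measurable_const hMmeas.measurable
  have hPA : P {ω | 1 / δ ≤ M ω} ≤ ENNReal.ofReal δ := by
    rw [← ENNReal.ofReal_toReal (measure_ne_top P _)]
    exact ENNReal.ofReal_le_ofReal htoReal
  have hsub : {ω | M ω < 1 / δ} ⊆ {ω | ∑ t ∈ Icc 1 T, X t ω ≤
      η * ∑ t ∈ Icc 1 T, (P[fun ω' => (X t ω') ^ 2 | ℱ (t - 1)]) ω
        + Real.log (1 / δ) / η} := by
    intro ω hω
    simp only [Set.mem_setOf_eq] at hω ⊢
    have h1 : η * ∑ t ∈ Icc 1 T, X t ω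
        - η ^ 2 * ∑ t ∈ Icc 1 T, (P[fun ω' => (X t ω') ^ 2 | ℱ (t - 1)]) ω
        < Real.log (1 / δ) := by
      have := Real.log_lt_log (Real.exp_pos _) hω
      rwa [Real.log_exp] at this
    have hcancel : η * (Real.log (1 / δ) / η) = Real.log (1 / δ) :=
      mul_div_cancel₀ _ hη0.ne'
    nlinarith [h1, hη0, hcancel]
  refine le_trans ?_ (measure_mono hsub)
  have hcompl : {ω | M ω < 1 / δ} = {ω | 1 / δ ≤ M ω}ᶜ := by
    ext ω; simp [not_le]
  rw [hcompl, measure_compl hAmeas (measure_ne_top _ _), measure_univ]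
  calc ENNReal.ofReal (1 - δ) = 1 - ENNReal.ofReal δ := by
        rw [ENNReal.ofReal_sub _ hδ0.le, ENNReal.ofReal_one]
    _ ≤ 1 - P {ω | 1 / δ ≤ M ω} := tsub_le_tsub_left hPA 1
end

section
/- Let (Ω, ℱ, P) be a probability space with a filtration {ℱ_t}_{t≥0}, and let {Y_t}_{t≥1} be a real-valued sequence of random variables adapted to {ℱ_t} (each Y_t is ℱ_t-measurable) such that 0 ≤ Y_t ≤ C almost surely for all t, for some real C > 0. Then for every T ∈ ℕ and every δ ∈ (0,1), with probability at least 1 − δ it holds that Σ_{t=1}^T E[Y_t | ℱ_{t−1}] ≤ (1 + 1/(2C)) Σ_{t=1}^T Y_t + 2(2C+1)² log(1/δ). -/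
open MeasureTheory Finset

private lemma exp_int_of_ub {Ω : Type*} {m : MeasurableSpace Ω} {P : Measure Ω}
    [IsFiniteMeasure P] {φ : Ω → ℝ} {B : ℝ}
    (hm : AEStronglyMeasurable φ P) (hb : ∀ᵐ ω ∂P, φ ω ≤ B) :
    Integrable (fun ω => Real.exp (φ ω)) P := by
  refine ⟨Real.continuous_exp.comp_aestronglyMeasurable hm,
    HasFiniteIntegral.of_bounded (C := Real.exp B) ?_⟩
  filter_upwards [hb] with ω hω
  rw [Real.norm_eq_abs, abs_of_pos (Real.exp_pos _)]
  exact Real.exp_le_exp.2 hω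

private lemma mgf_aux {Ω : Type*} {m0 : MeasurableSpace Ω} {P : Measure Ω}
    [IsProbabilityMeasure P] (ℱ : Filtration ℕ m0)
    (Y : ℕ → Ω → ℝ) (C lam a : ℝ) (hC : 0 < C) (hlam : 0 ≤ lam) (ha : 0 ≤ a)
    (hadapt : ∀ t, 1 ≤ t → StronglyMeasurable[ℱ t] (Y t))
    (hbdd : ∀ t, 1 ≤ t → ∀ᵐ ω ∂P, 0 ≤ Y t ω ∧ Y t ω ≤ C)
    (hkey : ∀ y : ℝ, 0 ≤ y → y ≤ C → Real.exp (-(lam * y)) ≤ 1 - a * y) :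
    ∀ T : ℕ, Integrable (fun ω => Real.exp (∑ t ∈ Icc 1 T,
        (a * (P[Y t | ℱ (t - 1)]) ω - lam * Y t ω))) P ∧
      ∫ ω, Real.exp (∑ t ∈ Icc 1 T,
        (a * (P[Y t | ℱ (t - 1)]) ω - lam * Y t ω)) ∂P ≤ 1 := by
  have hYsm : ∀ t, 1 ≤ t → StronglyMeasurable (Y t) :=
    fun t ht => (hadapt t ht).mono (ℱ.le t)
  have hYint : ∀ t, 1 ≤ t → Integrable (Y t) P := by
    intro t ht
    refine ⟨(hYsm t ht).aestronglyMeasurable, HasFiniteIntegral.of_bounded (C := C) ?_⟩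
    filter_upwards [hbdd t ht] with ω hω
    rw [Real.norm_eq_abs, abs_le]
    exact ⟨by linarith [hω.1, hC], hω.2⟩
  have hgbdd : ∀ t, 1 ≤ t → ∀ᵐ ω ∂P, 0 ≤ (P[Y t | ℱ (t - 1)]) ω ∧ (P[Y t | ℱ (t - 1)]) ω ≤ C := by
    intro t ht
    have h0 : 0 ≤ᵐ[P] P[Y t | ℱ (t - 1)] := condExp_nonneg ((hbdd t ht).mono fun ω h => h.1)
    have h1 : P[Y t | ℱ (t - 1)] ≤ᵐ[P] P[(fun _ => C) | ℱ (t - 1)] :=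
      condExp_mono (hYint t ht) (integrable_const C) ((hbdd t ht).mono fun ω h => h.2)
    rw [condExp_const (ℱ.le (t - 1)) C] at h1
    filter_upwards [h0, h1] with ω hω0 hω1
    exact ⟨hω0, hω1⟩
  -- measurability of partial sums
  have hFsm : ∀ T : ℕ, StronglyMeasurable[ℱ T]
      (fun ω => ∑ t ∈ Icc 1 T, (a * (P[Y t | ℱ (t - 1)]) ω - lam * Y t ω)) := by
    intro T
    apply Finset.stronglyMeasurable_fun_sum
    intro t htmem
    rw [Finset.mem_Icc] at htmem
    exact ((stronglyMeasurable_condExp.mono (ℱ.mono (by omega))).const_mul a).sub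
      (((hadapt t htmem.1).mono (ℱ.mono htmem.2)).const_mul lam)
  -- a.e. upper bound on partial sums
  have hall : ∀ᵐ ω ∂P, ∀ t : ℕ, 1 ≤ t →
      ((0 ≤ Y t ω ∧ Y t ω ≤ C) ∧ (0 ≤ (P[Y t | ℱ (t - 1)]) ω ∧ (P[Y t | ℱ (t - 1)]) ω ≤ C)) := by
    rw [ae_all_iff]
    intro t
    by_cases ht : 1 ≤ t
    · filter_upwards [hbdd t ht, hgbdd t ht] with ω h1 h2
      exact fun _ => ⟨h1, h2⟩
    · filter_upwards with ω h
      exact absurd h ht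
  have hFub : ∀ T : ℕ, ∀ᵐ ω ∂P,
      (∑ t ∈ Icc 1 T, (a * (P[Y t | ℱ (t - 1)]) ω - lam * Y t ω)) ≤ T * (a * C) := by
    intro T
    filter_upwards [hall] with ω hω
    calc ∑ t ∈ Icc 1 T, (a * (P[Y t | ℱ (t - 1)]) ω - lam * Y t ω)
        ≤ ∑ _t ∈ Icc 1 T, a * C := by
          apply Finset.sum_le_sum
          intro t htm
          rw [Finset.mem_Icc] at htm
          obtain ⟨⟨hY0, _⟩, ⟨_, hg1⟩⟩ := hω t htm.1
          have h1 : a * (P[Y t | ℱ (t - 1)]) ω ≤ a * C := mul_le_mul_of_nonneg_left hg1 ha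
          have h2 : 0 ≤ lam * Y t ω := mul_nonneg hlam hY0
          linarith
      _ = T * (a * C) := by
          rw [Finset.sum_const, Nat.card_Icc]
          simp [nsmul_eq_mul]
  intro T
  refine ⟨exp_int_of_ub ((hFsm T).mono (ℱ.le T)).aestronglyMeasurable (hFub T), ?_⟩
  induction T with
  | zero => simp
  | succ T ih =>
    have hb := hbdd (T + 1) (by omega)
    have hgb := hgbdd (T + 1) (by omega)
    have hYint1 := hYint (T + 1) (by omega)
    -- key sub-objects
    have hidx : (T + 1) - 1 = T := rfl
    have hfsm : StronglyMeasurable[ℱ T] (fun ω =>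
        Real.exp ((∑ t ∈ Icc 1 T, (a * (P[Y t | ℱ (t - 1)]) ω - lam * Y t ω))
          + a * (P[Y (T + 1) | ℱ T]) ω)) :=
      Real.continuous_exp.comp_stronglyMeasurable
        ((hFsm T).add (stronglyMeasurable_condExp.const_mul a))
    have hfsm0 : StronglyMeasurable (fun ω =>
        Real.exp ((∑ t ∈ Icc 1 T, (a * (P[Y t | ℱ (t - 1)]) ω - lam * Y t ω))
          + a * (P[Y (T + 1) | ℱ T]) ω)) := hfsm.mono (ℱ.le T)
    set f : Ω → ℝ := fun ω =>
        Real.exp ((∑ t ∈ Icc 1 T, (a * (P[Y t | ℱ (t - 1)]) ω - lam * Y t ω))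
          + a * (P[Y (T + 1) | ℱ T]) ω) with hfdef
    set h : Ω → ℝ := fun ω => Real.exp (-(lam * Y (T + 1) ω)) with hhdef
    have hhsm : StronglyMeasurable h :=
      Real.continuous_exp.comp_stronglyMeasurable
        (((hYsm (T + 1) (by omega)).const_mul lam).neg)
    have hfb : ∀ᵐ ω ∂P, f ω ≤ Real.exp (T * (a * C) + a * C) := by
      filter_upwards [hFub T, hgb] with ω h1 h2
      refine Real.exp_le_exp.2 ?_
      have : a * (P[Y (T + 1) | ℱ T]) ω ≤ a * C := mul_le_mul_of_nonneg_left h2.2 ha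
      linarith
    have hhb : ∀ᵐ ω ∂P, h ω ≤ 1 := by
      filter_upwards [hb] with ω h1
      rw [hhdef]
      calc Real.exp (-(lam * Y (T + 1) ω)) ≤ Real.exp 0 :=
            Real.exp_le_exp.2 (by nlinarith [h1.1])
        _ = 1 := Real.exp_zero
    simp only [Nat.add_sub_cancel] at hgb
    have hint_f : Integrable f P := by
      rw [hfdef]
      refine exp_int_of_ub (((hFsm T).add
        (stronglyMeasurable_condExp.const_mul a)).mono (ℱ.le T)).aestronglyMeasurable
        (B := ↑T * (a * C) + a * C) ?_
      filter_upwards [hFub T, hgb] with ω h1 h2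
      have : a * (P[Y (T + 1) | ℱ T]) ω ≤ a * C := mul_le_mul_of_nonneg_left h2.2 ha
      linarith
    have hint_h : Integrable h P := by
      refine ⟨hhsm.aestronglyMeasurable, HasFiniteIntegral.of_bounded (C := (1 : ℝ)) ?_⟩
      filter_upwards [hhb] with ω hω
      rw [Real.norm_eq_abs, abs_of_pos (Real.exp_pos _)]
      exact hω
    have hint_fh : Integrable (f * h) P := by
      refine ⟨(hfsm0.mul hhsm).aestronglyMeasurable,
        HasFiniteIntegral.of_bounded (C := Real.exp (↑T * (a * C) + a * C)) ?_⟩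
      filter_upwards [hfb, hhb] with ω h1 h2
      rw [Pi.mul_apply, Real.norm_eq_abs, abs_of_pos (mul_pos (Real.exp_pos _) (Real.exp_pos _))]
      calc f ω * h ω ≤ f ω * 1 :=
            mul_le_mul_of_nonneg_left h2 (Real.exp_pos _).le
        _ ≤ Real.exp (↑T * (a * C) + a * C) := by rw [mul_one]; exact h1
    -- conditional expectation of h is ≤ exp(-(a * g))
    have hEh_nonneg : 0 ≤ᵐ[P] P[h | ℱ T] :=
      condExp_nonneg (Filter.Eventually.of_forall fun ω => (Real.exp_pos _).le)
    have hEh_le1 : P[h | ℱ T] ≤ᵐ[P] fun _ => 1 := by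
      have := condExp_mono (m := ℱ T) hint_h (integrable_const (1 : ℝ)) hhb
      rwa [condExp_const (ℱ.le T) (1 : ℝ)] at this
    have hEh_le : ∀ᵐ ω ∂P, (P[h | ℱ T]) ω ≤ Real.exp (-(a * (P[Y (T + 1) | ℱ T]) ω)) := by
      have h1 : h ≤ᵐ[P] fun ω => 1 - a * Y (T + 1) ω := by
        filter_upwards [hb] with ω hω
        exact hkey _ hω.1 hω.2
      have hint_aY : Integrable (fun ω => 1 - a * Y (T + 1) ω) P := by
        have := (integrable_const (1 : ℝ)).sub (hYint1.const_mul a)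
        exact this
      have h2 := condExp_mono (m := ℱ T) hint_h hint_aY h1
      have h3 : P[(fun ω => 1 - a * Y (T + 1) ω) | ℱ T]
          =ᵐ[P] fun ω => 1 - a * (P[Y (T + 1) | ℱ T]) ω := by
        have e1 : (fun ω => 1 - a * Y (T + 1) ω) = (fun _ => (1 : ℝ)) - a • Y (T + 1) := by
          funext ω; simp [smul_eq_mul]
        rw [e1]
        have e2 := condExp_sub (μ := P) (m := ℱ T) (integrable_const (1 : ℝ)) (hYint1.smul a)
        have e4 := condExp_smul (μ := P) (m := ℱ T) a (Y (T + 1))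
        filter_upwards [e2, e4] with ω hω2 hω4
        rw [Pi.sub_apply] at hω2
        rw [hω2, condExp_const (ℱ.le T) (1 : ℝ), hω4]
        simp [smul_eq_mul]
      filter_upwards [h2, h3] with ω hω2 hω3
      have hle : (P[h | ℱ T]) ω ≤ 1 - a * (P[Y (T + 1) | ℱ T]) ω := by
        rw [← hω3]; exact hω2
      have h4 : 1 - a * (P[Y (T + 1) | ℱ T]) ω
          ≤ Real.exp (-(a * (P[Y (T + 1) | ℱ T]) ω)) := by
        have := Real.add_one_le_exp (-(a * (P[Y (T + 1) | ℱ T]) ω))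
        linarith
      linarith
    have hint_fE : Integrable (f * P[h | ℱ T]) P := by
      refine ⟨(hfsm0.mul (stronglyMeasurable_condExp.mono (ℱ.le T))).aestronglyMeasurable,
        HasFiniteIntegral.of_bounded (C := Real.exp (↑T * (a * C) + a * C)) ?_⟩
      filter_upwards [hfb, hEh_nonneg, hEh_le1] with ω h1 h2 h3
      rw [Pi.mul_apply, Real.norm_eq_abs, abs_of_nonneg (mul_nonneg (Real.exp_pos _).le h2)]
      calc f ω * (P[h | ℱ T]) ω ≤ f ω * 1 :=
            mul_le_mul_of_nonneg_left h3 (Real.exp_pos _).le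
        _ ≤ Real.exp (↑T * (a * C) + a * C) := by rw [mul_one]; exact h1
    have hint_expF : Integrable (fun ω =>
        Real.exp (∑ t ∈ Icc 1 T, (a * (P[Y t | ℱ (t - 1)]) ω - lam * Y t ω))) P :=
      exp_int_of_ub ((hFsm T).mono (ℱ.le T)).aestronglyMeasurable (hFub T)
    -- main computation
    calc ∫ ω, Real.exp (∑ t ∈ Icc 1 (T + 1),
            (a * (P[Y t | ℱ (t - 1)]) ω - lam * Y t ω)) ∂P
        = ∫ ω, (f * h) ω ∂P := by
          apply integral_congr_ae
          filter_upwards with ω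
          rw [Finset.sum_Icc_succ_top (by omega : 1 ≤ T + 1)]
          rw [Pi.mul_apply, hfdef, hhdef, ← Real.exp_add]
          congr 1
          simp only [Nat.add_sub_cancel]
          ring
      _ = ∫ ω, (P[f * h | ℱ T]) ω ∂P := (integral_condExp (μ := P) (f := f * h) (ℱ.le T)).symm
      _ = ∫ ω, (f * P[h | ℱ T]) ω ∂P :=
          integral_congr_ae (condExp_mul_of_stronglyMeasurable_left hfsm hint_fh hint_h)
      _ ≤ ∫ ω, Real.exp (∑ t ∈ Icc 1 T,
            (a * (P[Y t | ℱ (t - 1)]) ω - lam * Y t ω)) ∂P := by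
          apply integral_mono_ae hint_fE hint_expF
          filter_upwards [hEh_le] with ω hω
          rw [Pi.mul_apply]
          calc f ω * (P[h | ℱ T]) ω
              ≤ f ω * Real.exp (-(a * (P[Y (T + 1) | ℱ T]) ω)) :=
                mul_le_mul_of_nonneg_left hω (Real.exp_pos _).le
            _ = Real.exp (∑ t ∈ Icc 1 T, (a * (P[Y t | ℱ (t - 1)]) ω - lam * Y t ω)) := by
                rw [hfdef, ← Real.exp_add]
                congr 1
                ring
      _ ≤ 1 := ih

private lemma key_scalar (C y : ℝ) (hC : 0 < C) (hy0 : 0 ≤ y) (hyC : y ≤ C) :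
    Real.exp (-(1 / (C * (2 * C + 1)) * y)) ≤ 1 - 2 / (2 * C + 1) ^ 2 * y := by
  have hD : (0 : ℝ) < 2 * C + 1 := by linarith
  have hCD : (0 : ℝ) < C * (2 * C + 1) := by positivity
  have hx : (0 : ℝ) < 1 + 1 / (C * (2 * C + 1)) * y := by positivity
  have h1 : 1 + 1 / (C * (2 * C + 1)) * y ≤ Real.exp (1 / (C * (2 * C + 1)) * y) := by
    linarith [Real.add_one_le_exp (1 / (C * (2 * C + 1)) * y)]
  have h2 : Real.exp (-(1 / (C * (2 * C + 1)) * y))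
      ≤ (1 + 1 / (C * (2 * C + 1)) * y)⁻¹ := by
    rw [Real.exp_neg]
    exact inv_anti₀ hx h1
  refine h2.trans ?_
  rw [inv_eq_one_div, div_le_iff₀ hx]
  have hkey : 0 ≤ y * (2 * C + 1 - 2 * y) :=
    mul_nonneg hy0 (by linarith)
  rw [← sub_nonneg]
  have e : (1 - 2 / (2 * C + 1) ^ 2 * y) * (1 + 1 / (C * (2 * C + 1)) * y) - 1
      = (y * (2 * C + 1 - 2 * y)) / (C * (2 * C + 1) ^ 3) := by
    field_simp
    ring
  rw [e]
  positivity

/-- Consequence of Freedman's inequality for bounded, nonnegative adapted sequences: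
if `0 ≤ Y_t ≤ C` a.s. and each `Y_t` is `ℱ_t`-measurable, then for every `T` and `δ ∈ (0,1)`,
with probability at least `1 − δ`,
`∑_{t=1}^T E[Y_t | ℱ_{t−1}] ≤ (1 + 1/(2C)) ∑_{t=1}^T Y_t + 2(2C+1)² log(1/δ)`. -/
theorem freedman_consequence_condexp_le {Ω : Type*} {m0 : MeasurableSpace Ω} {P : Measure Ω}
    [IsProbabilityMeasure P] (ℱ : Filtration ℕ m0)
    (Y : ℕ → Ω → ℝ) (C : ℝ) (hC : 0 < C)
    (hadapt : ∀ t, 1 ≤ t → StronglyMeasurable[ℱ t] (Y t))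
    (hbdd : ∀ t, 1 ≤ t → ∀ᵐ ω ∂P, 0 ≤ Y t ω ∧ Y t ω ≤ C)
    (T : ℕ) (δ : ℝ) (hδ0 : 0 < δ) (hδ1 : δ < 1) :
    ENNReal.ofReal (1 - δ) ≤
      P {ω | ∑ t ∈ Icc 1 T, (P[Y t | ℱ (t - 1)]) ω ≤
        (1 + 1 / (2 * C)) * ∑ t ∈ Icc 1 T, Y t ω
          + 2 * (2 * C + 1) ^ 2 * Real.log (1 / δ)} := by
  have hD : (0 : ℝ) < 2 * C + 1 := by linarith
  set lam : ℝ := 1 / (C * (2 * C + 1)) with hlam_def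
  set a : ℝ := 2 / (2 * C + 1) ^ 2 with ha_def
  have hlam0 : 0 < lam := by rw [hlam_def]; positivity
  have ha0 : 0 < a := by rw [ha_def]; positivity
  obtain ⟨hint, hmgf⟩ := mgf_aux ℱ Y C lam a hC hlam0.le ha0.le hadapt hbdd
    (fun y hy0 hyC => key_scalar C y hC hy0 hyC) T
  set L : ℝ := Real.log (1 / δ) with hL_def
  have hL : 0 < L := Real.log_pos (by rw [lt_div_iff₀ hδ0]; linarith)
  -- the "good" event from the MGF bound
  set A : Set Ω := {ω | ∑ t ∈ Icc 1 T, (a * (P[Y t | ℱ (t - 1)]) ω - lam * Y t ω) ≤ L}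
    with hA_def
  have hSsm : StronglyMeasurable
      (fun ω => ∑ t ∈ Icc 1 T, (a * (P[Y t | ℱ (t - 1)]) ω - lam * Y t ω)) := by
    apply Finset.stronglyMeasurable_fun_sum
    intro t htmem
    rw [Finset.mem_Icc] at htmem
    exact ((stronglyMeasurable_condExp.mono (ℱ.le (t - 1))).const_mul a).sub
      (((hadapt t htmem.1).mono (ℱ.le t)).const_mul lam)
  have hA_meas : MeasurableSet A := measurableSet_le hSsm.measurable measurable_const
  -- A is contained in the target event
  have hsub : A ⊆ {ω | ∑ t ∈ Icc 1 T, (P[Y t | ℱ (t - 1)]) ω ≤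
      (1 + 1 / (2 * C)) * ∑ t ∈ Icc 1 T, Y t ω
        + 2 * (2 * C + 1) ^ 2 * Real.log (1 / δ)} := by
    intro ω hω
    simp only [hA_def, Set.mem_setOf_eq] at hω ⊢
    rw [← hL_def]
    set G : ℝ := ∑ t ∈ Icc 1 T, (P[Y t | ℱ (t - 1)]) ω with hG_def
    set Z : ℝ := ∑ t ∈ Icc 1 T, Y t ω with hZ_def
    have hsum : a * G - lam * Z
        = ∑ t ∈ Icc 1 T, (a * (P[Y t | ℱ (t - 1)]) ω - lam * Y t ω) := by
      rw [hG_def, hZ_def, Finset.mul_sum, Finset.mul_sum, ← Finset.sum_sub_distrib]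
    have hω' : a * G - lam * Z ≤ L := by rw [hsum]; exact hω
    have e1 : a * ((1 + 1 / (2 * C)) * Z) = lam * Z := by
      rw [ha_def, hlam_def]; field_simp
    have e2 : a * (2 * (2 * C + 1) ^ 2) = 4 := by
      rw [ha_def]; field_simp; ring
    have hmain : a * G ≤ a * ((1 + 1 / (2 * C)) * Z + 2 * (2 * C + 1) ^ 2 * L) := by
      have e3 : a * ((1 + 1 / (2 * C)) * Z + 2 * (2 * C + 1) ^ 2 * L)
          = lam * Z + 4 * L := by
        rw [mul_add, e1]
        have : a * (2 * (2 * C + 1) ^ 2 * L) = a * (2 * (2 * C + 1) ^ 2) * L := by ring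
        rw [this, e2]
      rw [e3]
      linarith
    exact le_of_mul_le_mul_left hmain ha0
  -- Markov bound on the complement
  have hAc : P Aᶜ ≤ ENNReal.ofReal δ := by
    have hBsub : Aᶜ ⊆ {ω | 1 / δ ≤ Real.exp
        (∑ t ∈ Icc 1 T, (a * (P[Y t | ℱ (t - 1)]) ω - lam * Y t ω))} := by
      intro ω hω
      simp only [hA_def, Set.mem_compl_iff, Set.mem_setOf_eq, not_le] at hω
      have : 1 / δ = Real.exp L := (Real.exp_log (by positivity)).symm
      rw [Set.mem_setOf_eq, this]
      exact Real.exp_le_exp.2 hω.le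
    have hmar := mul_meas_ge_le_integral_of_nonneg (μ := P)
      (f := fun ω => Real.exp (∑ t ∈ Icc 1 T, (a * (P[Y t | ℱ (t - 1)]) ω - lam * Y t ω)))
      (Filter.Eventually.of_forall fun ω => (Real.exp_pos _).le) hint (1 / δ)
    have htR : (P {x | 1 / δ ≤ Real.exp
        (∑ t ∈ Icc 1 T, (a * (P[Y t | ℱ (t - 1)]) x - lam * Y t x))}).toReal ≤ δ := by
      have h0 : (0 : ℝ) ≤ (P {x | 1 / δ ≤ Real.exp
          (∑ t ∈ Icc 1 T, (a * (P[Y t | ℱ (t - 1)]) x - lam * Y t x))}).toReal :=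
        ENNReal.toReal_nonneg
      have hdd : δ * (1 / δ) = 1 := by field_simp
      rw [measureReal_def] at hmar
      nlinarith [hmar.trans hmgf]
    have := (ENNReal.le_ofReal_iff_toReal_le (measure_ne_top P _) hδ0.le).2 htR
    exact (measure_mono hBsub).trans this
  -- conclude
  have hsum := measure_add_measure_compl (μ := P) hA_meas
  rw [measure_univ] at hsum
  have h1 : ENNReal.ofReal (1 - δ) + ENNReal.ofReal δ = 1 := by
    rw [← ENNReal.ofReal_add (by linarith) hδ0.le]
    norm_num
  have h2 : ENNReal.ofReal (1 - δ) + ENNReal.ofReal δ ≤ P A + ENNReal.ofReal δ := by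
    rw [h1, ← hsum]
    exact add_le_add_right hAc _
  have hPA : ENNReal.ofReal (1 - δ) ≤ P A :=
    (ENNReal.add_le_add_iff_right ENNReal.ofReal_ne_top).1 h2
  exact hPA.trans (measure_mono hsub)
end

section
/- Let (Ω, ℱ, P) be a probability space with a filtration {ℱ_t}_{t≥0}, and let {Y_t}_{t≥1} be a real-valued sequence of random variables adapted to {ℱ_t} (each Y_t is ℱ_t-measurable) such that 0 ≤ Y_t ≤ C almost surely for all t, for some real C > 0. Then for every T ∈ ℕ and every δ ∈ (0,1), with probability at least 1 − δ it holds that Σ_{t=1}^T Y_t ≤ 2 Σ_{t=1}^T E[Y_t | ℱ_{t−1}] + 4C log(1/δ). -/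
open MeasureTheory Finset

lemma freedman_aux_integrable {Ω : Type*} {m0 : MeasurableSpace Ω} {P : Measure Ω}
    [IsProbabilityMeasure P] {f : Ω → ℝ} (hf : AEStronglyMeasurable f P) (c : ℝ)
    (h : ∀ᵐ ω ∂P, ‖f ω‖ ≤ c) : Integrable f P :=
  (integrable_const c).mono' hf h

lemma freedman_exp_half_lt_two : Real.exp 2⁻¹ < 2 := by
  have h : Real.exp 2⁻¹ * Real.exp 2⁻¹ = Real.exp 1 := by
    rw [← Real.exp_add]; norm_num
  nlinarith [Real.exp_one_lt_d9, Real.exp_pos (2⁻¹ : ℝ)]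

lemma freedman_convex {C : ℝ} (hC : 0 < C) {x : ℝ} (hx0 : 0 ≤ x) (hxC : x ≤ C) :
    Real.exp ((2 * C)⁻¹ * x) ≤ 1 + (Real.exp 2⁻¹ - 1) / C * x := by
  have hxC' : x / C ≤ 1 := (div_le_one hC).mpr hxC
  have hxd : 0 ≤ x / C := div_nonneg hx0 hC.le
  have h := convexOn_exp.2 (Set.mem_univ (0 : ℝ)) (Set.mem_univ (2⁻¹ : ℝ))
    (show (0:ℝ) ≤ 1 - x / C by linarith) hxd (show 1 - x / C + x / C = 1 by ring)
  simp only [smul_eq_mul, mul_zero, zero_add, Real.exp_zero, mul_one] at h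
  have h1 : x / C * 2⁻¹ = (2 * C)⁻¹ * x := by
    rw [mul_inv]; ring
  have h2 : 1 - x / C + x / C * Real.exp 2⁻¹ = 1 + (Real.exp 2⁻¹ - 1) / C * x := by
    field_simp; ring
  rw [h1, h2] at h
  exact h

/-- The exponential supermartingale bound. -/
lemma freedman_super {Ω : Type*} {m0 : MeasurableSpace Ω} {P : Measure Ω}
    [IsProbabilityMeasure P] (ℱ : Filtration ℕ m0)
    (Y : ℕ → Ω → ℝ) (C : ℝ) (hC : 0 < C)
    (hadapt : ∀ t, 1 ≤ t → StronglyMeasurable[ℱ t] (Y t))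
    (hbdd : ∀ t, 1 ≤ t → ∀ᵐ ω ∂P, 0 ≤ Y t ω ∧ Y t ω ≤ C) (T : ℕ) :
    Integrable (fun ω => Real.exp (∑ t ∈ Icc 1 T,
        ((2 * C)⁻¹ * Y t ω - (Real.exp 2⁻¹ - 1) / C * (P[Y t | ℱ (t - 1)]) ω))) P ∧
    ∫ ω, Real.exp (∑ t ∈ Icc 1 T,
        ((2 * C)⁻¹ * Y t ω - (Real.exp 2⁻¹ - 1) / C * (P[Y t | ℱ (t - 1)]) ω)) ∂P ≤ 1 := by
  set L : ℝ := (2 * C)⁻¹ with hLdef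
  set α : ℝ := (Real.exp 2⁻¹ - 1) / C with hαdef
  have hL : 0 ≤ L := by positivity
  have hα : 0 ≤ α := by
    have : (1 : ℝ) ≤ Real.exp 2⁻¹ := Real.one_le_exp (by norm_num)
    have := sub_nonneg.mpr this
    positivity
  set g : ℕ → Ω → ℝ := fun t => P[Y t | ℱ (t - 1)] with hgdef
  set F : ℕ → Ω → ℝ := fun T ω => ∑ t ∈ Icc 1 T, (L * Y t ω - α * g t ω) with hFdef
  -- basic facts
  have hYm : ∀ t, 1 ≤ t → StronglyMeasurable (Y t) := fun t ht => (hadapt t ht).mono (ℱ.le t)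
  have hintY : ∀ t, 1 ≤ t → Integrable (Y t) P := by
    intro t ht
    refine freedman_aux_integrable (hYm t ht).aestronglyMeasurable C ?_
    filter_upwards [hbdd t ht] with ω hω
    rw [Real.norm_eq_abs, abs_le]
    exact ⟨by linarith [hω.1, hC], hω.2⟩
  have hgbdd : ∀ t, 1 ≤ t → ∀ᵐ ω ∂P, 0 ≤ g t ω ∧ g t ω ≤ C := by
    intro t ht
    have h0 : 0 ≤ᵐ[P] g t :=
      condExp_nonneg ((hbdd t ht).mono fun ω hω => hω.1)
    have h1 : g t ≤ᵐ[P] P[(fun _ => C) | ℱ (t - 1)] :=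
      condExp_mono (hintY t ht) (integrable_const C) ((hbdd t ht).mono fun ω hω => hω.2)
    rw [condExp_const (ℱ.le (t - 1))] at h1
    filter_upwards [h0, h1] with ω hω0 hω1
    exact ⟨hω0, hω1⟩
  have hmaster : ∀ᵐ ω ∂P, ∀ t, 1 ≤ t →
      (0 ≤ Y t ω ∧ Y t ω ≤ C) ∧ (0 ≤ g t ω ∧ g t ω ≤ C) := by
    rw [ae_all_iff]
    intro t
    by_cases ht : 1 ≤ t
    · filter_upwards [hbdd t ht, hgbdd t ht] with ω h1 h2
      exact fun _ => ⟨h1, h2⟩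
    · exact ae_of_all _ fun ω h => absurd h ht
  have hFmeas : ∀ n, StronglyMeasurable[ℱ n] (F n) := by
    intro n
    apply Finset.stronglyMeasurable_fun_sum
    intro t ht
    obtain ⟨h1, h2⟩ := mem_Icc.mp ht
    exact (((hadapt t h1).mono (ℱ.mono h2)).const_mul L).sub
      ((stronglyMeasurable_condExp.mono (ℱ.mono ((Nat.sub_le t 1).trans h2))).const_mul α)
  have hFint : ∀ n, Integrable (fun ω => Real.exp (F n ω)) P := by
    intro n
    refine freedman_aux_integrable
      (Real.continuous_exp.comp_stronglyMeasurable
        ((hFmeas n).mono (ℱ.le n))).aestronglyMeasurable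
      (Real.exp (((Icc 1 n).card : ℝ) * (L * C))) ?_
    filter_upwards [hmaster] with ω hω
    rw [Real.norm_eq_abs, abs_of_pos (Real.exp_pos _), Real.exp_le_exp]
    calc F n ω ≤ ∑ _t ∈ Icc 1 n, L * C := by
          refine Finset.sum_le_sum fun t ht => ?_
          obtain ⟨h1, _⟩ := mem_Icc.mp ht
          obtain ⟨⟨hY0, hYC⟩, hg0, _⟩ := hω t h1
          have hag : 0 ≤ α * g t ω := mul_nonneg hα hg0
          have hLY : L * Y t ω ≤ L * C := mul_le_mul_of_nonneg_left hYC hL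
          linarith
      _ = ((Icc 1 n).card : ℝ) * (L * C) := by
          rw [Finset.sum_const, nsmul_eq_mul]
  -- the integral bound, by induction
  have hmain : ∀ n, ∫ ω, Real.exp (F n ω) ∂P ≤ 1 := by
    intro n
    induction n with
    | zero => simp [hFdef]
    | succ T ih =>
      have hm : ℱ T ≤ m0 := ℱ.le T
      have h1T : (1 : ℕ) ≤ T + 1 := Nat.le_add_left 1 T
      have hsplit : ∀ ω, F (T + 1) ω = F T ω + (L * Y (T + 1) ω - α * g (T + 1) ω) := by
        intro ω
        exact Finset.sum_Icc_succ_top h1T _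
      set u : Ω → ℝ := fun ω => Real.exp (F T ω) * Real.exp (-(α * g (T + 1) ω)) with hu
      set v : Ω → ℝ := fun ω => Real.exp (L * Y (T + 1) ω) with hv
      have huv : (fun ω => Real.exp (F (T + 1) ω)) = u * v := by
        funext ω
        rw [Pi.mul_apply, hu, hv, hsplit ω,
          show F T ω + (L * Y (T + 1) ω - α * g (T + 1) ω)
            = (F T ω + -(α * g (T + 1) ω)) + L * Y (T + 1) ω from by ring,
          Real.exp_add, Real.exp_add]
      have hgm : StronglyMeasurable[ℱ T] (g (T + 1)) := stronglyMeasurable_condExp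
      have hum : StronglyMeasurable[ℱ T] u :=
        (Real.continuous_exp.comp_stronglyMeasurable (hFmeas T)).mul
          (Real.continuous_exp.comp_stronglyMeasurable (hgm.const_mul α).neg)
      have hvint : Integrable v P := by
        refine freedman_aux_integrable
          (Real.continuous_exp.comp_stronglyMeasurable
            (((hadapt (T + 1) h1T).mono (ℱ.le (T + 1))).const_mul L)).aestronglyMeasurable
          (Real.exp (L * C)) ?_
        filter_upwards [hbdd (T + 1) h1T] with ω hω
        rw [hv, Real.norm_eq_abs, abs_of_pos (Real.exp_pos _), Real.exp_le_exp]
        exact mul_le_mul_of_nonneg_left hω.2 hL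
      have huvint : Integrable (u * v) P := huv ▸ hFint (T + 1)
      have hint1Y : Integrable (fun ω => 1 + α * Y (T + 1) ω) P :=
        (integrable_const 1).add ((hintY (T + 1) h1T).const_mul α)
      -- pull-out and conditional bound
      have hpull : P[u * v | ℱ T] =ᵐ[P] u * P[v | ℱ T] :=
        condExp_mul_of_stronglyMeasurable_left hum huvint hvint
      have hvle : v ≤ᵐ[P] fun ω => 1 + α * Y (T + 1) ω := by
        filter_upwards [hbdd (T + 1) h1T] with ω hω
        exact freedman_convex hC hω.1 hω.2
      have hcondle : P[v | ℱ T] ≤ᵐ[P] fun ω => 1 + α * g (T + 1) ω := by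
        have h1 : P[v | ℱ T] ≤ᵐ[P] P[(fun ω => 1 + α * Y (T + 1) ω) | ℱ T] :=
          condExp_mono hvint hint1Y hvle
        have h2 : P[(fun ω => 1 + α * Y (T + 1) ω) | ℱ T]
            =ᵐ[P] fun ω => 1 + α * g (T + 1) ω := by
          have hadd : P[(fun _ => (1 : ℝ)) + (α • Y (T + 1)) | ℱ T]
              =ᵐ[P] P[(fun _ => (1 : ℝ)) | ℱ T] + P[α • Y (T + 1) | ℱ T] :=
            condExp_add (integrable_const 1) ((hintY (T + 1) h1T).smul α) _
          have hsmul : P[α • Y (T + 1) | ℱ T] =ᵐ[P] α • P[Y (T + 1) | ℱ T] :=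
            condExp_smul α (Y (T + 1)) _
          have hconst : P[(fun _ => (1 : ℝ)) | ℱ T] = fun _ => (1 : ℝ) :=
            condExp_const hm 1
          have heq : (fun ω => 1 + α * Y (T + 1) ω)
              = (fun _ => (1 : ℝ)) + (α • Y (T + 1)) := by
            funext ω; simp [Pi.add_apply]
          rw [heq]
          refine hadd.trans ?_
          rw [hconst]
          filter_upwards [hsmul] with ω hω
          have : g (T + 1) = P[Y (T + 1) | ℱ T] := rfl
          simp only [Pi.add_apply, Pi.smul_apply, smul_eq_mul] at hω ⊢
          rw [hω, this]
        exact h1.trans h2.le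
      have hmono : P[u * v | ℱ T] ≤ᵐ[P] fun ω => Real.exp (F T ω) := by
        filter_upwards [hpull, hcondle] with ω h1 h2
        rw [h1, Pi.mul_apply]
        have hu0 : 0 ≤ u ω := mul_nonneg (Real.exp_pos _).le (Real.exp_pos _).le
        calc u ω * (P[v | ℱ T]) ω ≤ u ω * (1 + α * g (T + 1) ω) :=
              mul_le_mul_of_nonneg_left h2 hu0
          _ = Real.exp (F T ω) *
              (Real.exp (-(α * g (T + 1) ω)) * (1 + α * g (T + 1) ω)) := by
              rw [hu]; ring
          _ ≤ Real.exp (F T ω) * 1 := by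
              refine mul_le_mul_of_nonneg_left ?_ (Real.exp_pos _).le
              have h3 : α * g (T + 1) ω + 1 ≤ Real.exp (α * g (T + 1) ω) :=
                Real.add_one_le_exp _
              have h4 := mul_le_mul_of_nonneg_left h3 (Real.exp_pos (-(α * g (T + 1) ω))).le
              rw [← Real.exp_add, neg_add_cancel, Real.exp_zero] at h4
              calc Real.exp (-(α * g (T + 1) ω)) * (1 + α * g (T + 1) ω)
                  = Real.exp (-(α * g (T + 1) ω)) * (α * g (T + 1) ω + 1) := by ring
                _ ≤ 1 := h4
          _ = Real.exp (F T ω) := mul_one _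
      calc ∫ ω, Real.exp (F (T + 1) ω) ∂P = ∫ ω, (u * v) ω ∂P := by rw [huv]
        _ = ∫ ω, (P[u * v | ℱ T]) ω ∂P := (integral_condExp hm).symm
        _ ≤ ∫ ω, Real.exp (F T ω) ∂P :=
            integral_mono_ae integrable_condExp (hFint T) hmono
        _ ≤ 1 := ih
  exact ⟨hFint T, hmain T⟩

/-- Consequence of Freedman's inequality for bounded, nonnegative adapted sequences:
if `0 ≤ Y_t ≤ C` a.s. and each `Y_t` is `ℱ_t`-measurable, then for every `T` and `δ ∈ (0,1)`,
with probability at least `1 − δ`,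
`∑_{t=1}^T Y_t ≤ 2 ∑_{t=1}^T E[Y_t | ℱ_{t−1}] + 4C log(1/δ)`. -/
theorem freedman_consequence_sum_le {Ω : Type*} {m0 : MeasurableSpace Ω} {P : Measure Ω}
    [IsProbabilityMeasure P] (ℱ : Filtration ℕ m0)
    (Y : ℕ → Ω → ℝ) (C : ℝ) (hC : 0 < C)
    (hadapt : ∀ t, 1 ≤ t → StronglyMeasurable[ℱ t] (Y t))
    (hbdd : ∀ t, 1 ≤ t → ∀ᵐ ω ∂P, 0 ≤ Y t ω ∧ Y t ω ≤ C)
    (T : ℕ) (δ : ℝ) (hδ0 : 0 < δ) (hδ1 : δ < 1) :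
    ENNReal.ofReal (1 - δ) ≤
      P {ω | ∑ t ∈ Icc 1 T, Y t ω ≤
        2 * ∑ t ∈ Icc 1 T, (P[Y t | ℱ (t - 1)]) ω + 4 * C * Real.log (1 / δ)} := by
  obtain ⟨hint, hsuper⟩ := freedman_super ℱ Y C hC hadapt hbdd T
  set g : ℕ → Ω → ℝ := fun t => P[Y t | ℱ (t - 1)] with hgdef
  set fT : Ω → ℝ := fun ω => Real.exp (∑ t ∈ Icc 1 T,
      ((2 * C)⁻¹ * Y t ω - (Real.exp 2⁻¹ - 1) / C * g t ω)) with hfT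
  set A : Set Ω := {ω | ∑ t ∈ Icc 1 T, Y t ω ≤
      2 * ∑ t ∈ Icc 1 T, g t ω + 4 * C * Real.log (1 / δ)} with hA
  have hlg : 0 < Real.log (1 / δ) := Real.log_pos (by rw [lt_div_iff₀ hδ0]; linarith)
  -- Markov
  have hmark := mul_meas_ge_le_integral_of_nonneg
    (ae_of_all P fun ω => (Real.exp_pos _).le) hint δ⁻¹
  have hPB : P {ω | δ⁻¹ ≤ fT ω} ≤ ENNReal.ofReal δ := by
    have h1 : δ⁻¹ * (P {ω | δ⁻¹ ≤ fT ω}).toReal ≤ 1 := hmark.trans hsuper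
    have h2 : (P {ω | δ⁻¹ ≤ fT ω}).toReal ≤ δ := by
      have h3 := mul_le_mul_of_nonneg_left h1 hδ0.le
      rwa [mul_one, ← mul_assoc, mul_inv_cancel₀ (ne_of_gt hδ0), one_mul] at h3
    exact (ENNReal.le_ofReal_iff_toReal_le (measure_ne_top P _) hδ0.le).mpr h2
  -- a.e. inclusion of complement
  have hgbdd : ∀ t, 1 ≤ t → ∀ᵐ ω ∂P, 0 ≤ g t ω := by
    intro t ht
    exact condExp_nonneg ((hbdd t ht).mono fun ω hω => hω.1)
  have hmaster : ∀ᵐ ω ∂P, ∀ t, 1 ≤ t → 0 ≤ g t ω := by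
    rw [ae_all_iff]
    intro t
    by_cases ht : 1 ≤ t
    · filter_upwards [hgbdd t ht] with ω h1
      exact fun _ => h1
    · exact ae_of_all _ fun ω h => absurd h ht
  have hincl : Aᶜ ≤ᵐ[P] {ω | δ⁻¹ ≤ fT ω} := by
    filter_upwards [hmaster] with ω hω hmem
    have hnot : ¬ (∑ t ∈ Icc 1 T, Y t ω ≤
        2 * ∑ t ∈ Icc 1 T, g t ω + 4 * C * Real.log (1 / δ)) := hmem
    push_neg at hnot
    set sY := ∑ t ∈ Icc 1 T, Y t ω with hsY
    set sg := ∑ t ∈ Icc 1 T, g t ω with hsg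
    have hsg0 : 0 ≤ sg := Finset.sum_nonneg fun t ht => hω t (mem_Icc.mp ht).1
    -- goal : δ⁻¹ ≤ fT ω
    show δ⁻¹ ≤ fT ω
    have hS : (∑ t ∈ Icc 1 T,
        ((2 * C)⁻¹ * Y t ω - (Real.exp 2⁻¹ - 1) / C * g t ω))
        = (2 * C)⁻¹ * sY - (Real.exp 2⁻¹ - 1) / C * sg := by
      rw [Finset.sum_sub_distrib, ← Finset.mul_sum, ← Finset.mul_sum]
    have hexp2 : Real.exp 2⁻¹ < 2 := freedman_exp_half_lt_two
    have hkey : Real.log (1 / δ) ≤ (2 * C)⁻¹ * sY - (Real.exp 2⁻¹ - 1) / C * sg := by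
      have hCmul : C * ((2 * C)⁻¹ * sY - (Real.exp 2⁻¹ - 1) / C * sg)
          = sY / 2 - (Real.exp 2⁻¹ - 1) * sg := by
        field_simp
      have h5 : C * Real.log (1 / δ) ≤ sY / 2 - (Real.exp 2⁻¹ - 1) * sg := by
        nlinarith [hnot, hsg0, hlg, hC]
      have := (mul_le_mul_iff_right₀ hC).mpr (le_refl (0:ℝ))
      nlinarith [h5, hCmul, hC]
    have hdel : δ⁻¹ = Real.exp (Real.log (1 / δ)) := by
      rw [Real.exp_log (by positivity), one_div]
    have hfTω : fT ω = Real.exp ((2 * C)⁻¹ * sY - (Real.exp 2⁻¹ - 1) / C * sg) :=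
      congrArg Real.exp hS
    rw [hfTω, hdel]
    exact Real.exp_le_exp.mpr hkey
  have hAmeas : MeasurableSet A := by
    refine measurableSet_le ?_ ?_
    · exact Finset.measurable_sum _ fun t ht =>
        ((hadapt t (mem_Icc.mp ht).1).mono (ℱ.le t)).measurable
    · exact ((Finset.measurable_sum (Icc 1 T) fun t _ =>
        (stronglyMeasurable_condExp.mono (ℱ.le (t - 1))).measurable).const_mul 2).add_const _
  have hcompl : P Aᶜ ≤ ENNReal.ofReal δ := (measure_mono_ae hincl).trans hPB
  have hAeq : P Aᶜ = 1 - P A := prob_compl_eq_one_sub hAmeas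
  have h1le : (1 : ENNReal) ≤ P A + ENNReal.ofReal δ := by
    have := hAeq ▸ hcompl
    calc (1 : ENNReal) = P A + (1 - P A) := by
          rw [add_tsub_cancel_of_le prob_le_one]
      _ ≤ P A + ENNReal.ofReal δ := add_le_add_right this _
  calc ENNReal.ofReal (1 - δ) = 1 - ENNReal.ofReal δ := by
        rw [ENNReal.ofReal_sub 1 hδ0.le, ENNReal.ofReal_one]
    _ ≤ P A := tsub_le_iff_right.mpr h1le
end

section
/- (Cumulative visitation bound.) Let X be a finite set and let M ≥ 1 and H ≥ 1 be integers. Let x_{m,h} ∈ X be given for all m ∈ {1, …, M} and h ∈ {1, …, H} (the element visited at step h of episode m). For y ∈ X and m ∈ {1, …, M}, let N_{m−1}(y) = #{(m', h') : 1 ≤ m' ≤ m − 1, 1 ≤ h' ≤ H, x_{m',h'} = y} denote the number of occurrences of y during episodes 1, …, m − 1. Then Σ_{m=1}^{M} Σ_{h=1}^{H} 𝟙{N_{m−1}(x_{m,h}) ≥ H} / N_{m−1}(x_{m,h}) ≤ 3 |X| log(MH). -/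
open Finset

lemma key_ineq (n c : ℕ) (hn : 1 ≤ n) (hc : c ≤ n) :
    (c : ℝ) / n ≤ 2 * (Real.log (n + c) - Real.log n) := by
  have hn0 : (0:ℝ) < n := by exact_mod_cast hn
  have hc0 : (0:ℝ) ≤ c := by positivity
  have hnc : (0:ℝ) < n + c := by linarith
  have h1 : Real.log ((n:ℝ) / (n + c)) ≤ (n:ℝ)/(n+c) - 1 :=
    Real.log_le_sub_one_of_pos (by positivity)
  have h2 : Real.log ((n:ℝ) / (n + c)) = Real.log n - Real.log (n + c) :=
    Real.log_div (ne_of_gt hn0) (ne_of_gt hnc)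
  rw [h2] at h1
  have hcn : (c:ℝ) ≤ n := by exact_mod_cast hc
  have h3 : (c:ℝ)/(n+c) ≤ Real.log (n+c) - Real.log n := by
    have h4 : (n:ℝ)/(n+c) - 1 = -((c:ℝ)/(n+c)) := by field_simp; ring
    rw [h4] at h1; linarith
  have h5 : (c:ℝ)/n ≤ 2*((c:ℝ)/(n+c)) := by
    rw [mul_div_assoc', div_le_div_iff₀ hn0 hnc]
    nlinarith
  linarith

lemma log_nat_mono {a b : ℕ} (h : a ≤ b) : Real.log a ≤ Real.log b := by
  rcases Nat.eq_zero_or_pos a with rfl | ha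
  · simpa using Real.log_natCast_nonneg b
  · exact Real.log_le_log (by exact_mod_cast ha) (by exact_mod_cast h)


/-- Cumulative visitation bound: with `x m h` the element visited at step `h` of episode `m`
(for `1 ≤ m ≤ M`, `1 ≤ h ≤ H`), and `N m y` the number of occurrences of `y` during episodes
`1, …, m`, we have
`∑_{m=1}^{M} ∑_{h=1}^{H} 𝟙{N_{m−1}(x_{m,h}) ≥ H} / N_{m−1}(x_{m,h}) ≤ 3 |X| log(MH)`. -/
theorem cumulative_visitation_bound {X : Type*} [Fintype X] [DecidableEq X]
    (M H : ℕ) (hM : 1 ≤ M) (hH : 1 ≤ H)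
    (x : ℕ → ℕ → X)
    (N : ℕ → X → ℕ)
    (hN : ∀ m y, N m y =
      ((Icc 1 m ×ˢ Icc 1 H).filter (fun p => x p.1 p.2 = y)).card) :
    ∑ m ∈ Icc 1 M, ∑ h ∈ Icc 1 H,
        (if H ≤ N (m - 1) (x m h) then (1 : ℝ) / (N (m - 1) (x m h)) else 0) ≤
      3 * (Fintype.card X : ℝ) * Real.log ((M : ℝ) * (H : ℝ)) := by
  set c : ℕ → X → ℕ := fun m y => ((Icc 1 H).filter (fun h => x m h = y)).card with hc
  -- N as a cumulative sum of c
  have hNsum : ∀ m y, N m y = ∑ m' ∈ Icc 1 m, c m' y := by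
    intro m y
    rw [hN, Finset.card_filter, Finset.sum_product]
    refine Finset.sum_congr rfl fun m' _ => ?_
    simp only [hc, Finset.card_filter]
  have hNstep : ∀ m y, 1 ≤ m → N m y = N (m-1) y + c m y := by
    intro m y hm
    obtain ⟨k, rfl⟩ : ∃ k, m = k + 1 := ⟨m - 1, (Nat.succ_pred_eq_of_pos hm).symm⟩
    rw [hNsum, hNsum, Finset.sum_Icc_succ_top (Nat.le_add_left 1 k)]
    simp
  have hcH : ∀ m y, c m y ≤ H := by
    intro m y
    calc c m y ≤ (Icc 1 H).card := Finset.card_filter_le _ _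
    _ = H := by simp
  have hNM : ∀ y, N M y ≤ M * H := by
    intro y
    rw [hNsum]
    calc ∑ m' ∈ Icc 1 M, c m' y ≤ ∑ m' ∈ Icc 1 M, H :=
          Finset.sum_le_sum fun m' _ => hcH m' y
    _ = M * H := by simp [Nat.card_Icc]
  have hN0 : ∀ y, N 0 y = 0 := by intro y; rw [hNsum]; simp
  -- regroup inner sum by y
  set F : ℕ → X → ℝ := fun m y => if H ≤ N (m - 1) y then (1 : ℝ) / (N (m - 1) y) else 0
    with hF
  have hregroup : ∀ m, ∑ h ∈ Icc 1 H, F m (x m h) = ∑ y : X, (c m y : ℝ) * F m y := by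
    intro m
    rw [← Finset.sum_fiberwise_of_maps_to (fun h _ => Finset.mem_univ (x m h))
        (fun h => F m (x m h))]
    refine Finset.sum_congr rfl fun y _ => ?_
    rw [Finset.sum_congr rfl (fun h hh => by
      rw [(Finset.mem_filter.mp hh).2]), Finset.sum_const, hc]
    simp [nsmul_eq_mul]
  calc ∑ m ∈ Icc 1 M, ∑ h ∈ Icc 1 H, F m (x m h)
      = ∑ m ∈ Icc 1 M, ∑ y : X, (c m y : ℝ) * F m y := by
        exact Finset.sum_congr rfl fun m _ => hregroup m
    _ = ∑ y : X, ∑ m ∈ Icc 1 M, (c m y : ℝ) * F m y := Finset.sum_comm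
    _ ≤ ∑ y : X, ∑ m ∈ Icc 1 M,
          (2 * Real.log (N m y) - 2 * Real.log (N (m-1) y)) := by
        refine Finset.sum_le_sum fun y _ => Finset.sum_le_sum fun m hm => ?_
        have hm1 : 1 ≤ m := (Finset.mem_Icc.mp hm).1
        have hmono : Real.log (N (m-1) y) ≤ Real.log (N m y) :=
          log_nat_mono (by rw [hNstep m y hm1]; exact Nat.le_add_right _ _)
        rw [hF]
        by_cases hcase : H ≤ N (m-1) y
        · simp only [hcase, if_true]
          have hn1 : 1 ≤ N (m-1) y := le_trans hH hcase
          have hkey := key_ineq (N (m-1) y) (c m y) hn1 (le_trans (hcH m y) hcase)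
          have heq : ((N (m-1) y : ℝ) + c m y) = ((N m y : ℝ)) := by
            rw [hNstep m y hm1]; push_cast; ring
          rw [heq] at hkey
          calc (c m y : ℝ) * (1 / N (m-1) y) = (c m y : ℝ) / N (m-1) y := by ring
          _ ≤ 2 * (Real.log (N m y) - Real.log (N (m-1) y)) := hkey
          _ = 2 * Real.log (N m y) - 2 * Real.log (N (m-1) y) := by ring
        · simp only [hcase, if_false, mul_zero]
          linarith
    _ = ∑ y : X, (2 * Real.log (N M y) - 2 * Real.log (N 0 y)) := by
        refine Finset.sum_congr rfl fun y _ => ?_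
        rw [show Icc 1 M = Ico 1 (M+1) by rfl, Finset.sum_Ico_eq_sum_range]
        refine (Finset.sum_congr rfl fun i _ => ?_).trans
          (Finset.sum_range_sub (fun i => 2 * Real.log (N i y)) M)
        rw [Nat.add_comm 1 i, Nat.add_sub_cancel]
    _ ≤ ∑ y : X, 2 * Real.log ((M:ℝ) * H) := by
        refine Finset.sum_le_sum fun y _ => ?_
        rw [hN0 y]
        simp only [Nat.cast_zero, Real.log_zero, mul_zero, sub_zero]
        have := log_nat_mono (hNM y)
        push_cast at this
        linarith
    _ = 2 * (Fintype.card X : ℝ) * Real.log ((M:ℝ) * H) := by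
        rw [Finset.sum_const, Finset.card_univ, nsmul_eq_mul]; ring
    _ ≤ 3 * (Fintype.card X : ℝ) * Real.log ((M:ℝ) * H) := by
        have hlog : 0 ≤ Real.log ((M:ℝ) * H) := by
          apply Real.log_nonneg
          have : (1:ℝ) ≤ M := by exact_mod_cast hM
          have h2 : (1:ℝ) ≤ H := by exact_mod_cast hH
          nlinarith
        nlinarith [Fintype.card X |>.cast_nonneg (α := ℝ)]
end

section
/- Let S be a finite set, and let p and p̄ be probability mass functions on S (nonnegative functions summing to 1). Let B ≥ 0, L ≥ 0, n ≥ 1 and α > 0 be real numbers, and let u, v : S → ℝ satisfy 0 ≤ v(s) ≤ u(s) ≤ B for all s ∈ S. Assume |√(Var_p(u)) − √(Var_{p̄}(u))| ≤ √(12 B² L / n). Then √(2L) · |√(Var_{p̄}(v)) − √(Var_p(u))| / √n ≤ (1/α) · E_{p̄}[u − v] + (5 + α/2) · B L / n. -/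
open Finset

/-- Expectation of `f` under a probability mass function `q` on a finite set. -/
noncomputable def pmfExp {S : Type*} [Fintype S] (q f : S → ℝ) : ℝ :=
  ∑ s, q s * f s

/-- Variance of `f` under a probability mass function `q` on a finite set. -/
noncomputable def pmfVar {S : Type*} [Fintype S] (q f : S → ℝ) : ℝ :=
  pmfExp q (fun s => f s ^ 2) - (pmfExp q f) ^ 2

lemma pmfExp_sub {S : Type*} [Fintype S] (q f g : S → ℝ) :
    pmfExp q (fun s => f s - g s) = pmfExp q f - pmfExp q g := by
  simp [pmfExp, mul_sub, Finset.sum_sub_distrib]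

lemma pmfVar_eq_sum {S : Type*} [Fintype S] (q f : S → ℝ) (hq1 : ∑ s, q s = 1) :
    pmfVar q f = ∑ s, q s * (f s - pmfExp q f) ^ 2 := by
  have h : ∑ s, q s * (f s - pmfExp q f) ^ 2
      = (∑ s, q s * f s ^ 2) - 2 * pmfExp q f * (∑ s, q s * f s)
        + (pmfExp q f) ^ 2 * ∑ s, q s := by
    rw [Finset.mul_sum, Finset.mul_sum, ← Finset.sum_sub_distrib, ← Finset.sum_add_distrib]
    exact Finset.sum_congr rfl fun s _ => by ring
  rw [h, hq1]
  show pmfVar q f = _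
  unfold pmfVar pmfExp
  ring

lemma sqrt_pmfVar_eq_norm {S : Type*} [Fintype S] (q f : S → ℝ) (hq0 : ∀ s, 0 ≤ q s)
    (hq1 : ∑ s, q s = 1) (x : EuclideanSpace ℝ S)
    (hx : ∀ s, x s = Real.sqrt (q s) * (f s - pmfExp q f)) :
    Real.sqrt (pmfVar q f) = ‖x‖ := by
  rw [EuclideanSpace.norm_eq, pmfVar_eq_sum q f hq1]
  congr 1
  apply Finset.sum_congr rfl
  intro s _
  rw [hx s, Real.norm_eq_abs, sq_abs, mul_pow, Real.sq_sqrt (hq0 s)]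

lemma sd_triangle {S : Type*} [Fintype S] (q f g : S → ℝ) (hq0 : ∀ s, 0 ≤ q s)
    (hq1 : ∑ s, q s = 1) :
    |Real.sqrt (pmfVar q f) - Real.sqrt (pmfVar q g)|
      ≤ Real.sqrt (pmfVar q (fun s => f s - g s)) := by
  set x : EuclideanSpace ℝ S := WithLp.toLp 2 fun s => Real.sqrt (q s) * (f s - pmfExp q f) with hxdef
  set y : EuclideanSpace ℝ S := WithLp.toLp 2 fun s => Real.sqrt (q s) * (g s - pmfExp q g) with hydef
  have hx : Real.sqrt (pmfVar q f) = ‖x‖ :=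
    sqrt_pmfVar_eq_norm q f hq0 hq1 x fun s => rfl
  have hy : Real.sqrt (pmfVar q g) = ‖y‖ :=
    sqrt_pmfVar_eq_norm q g hq0 hq1 y fun s => rfl
  have hxy : Real.sqrt (pmfVar q (fun s => f s - g s)) = ‖x - y‖ := by
    apply sqrt_pmfVar_eq_norm _ _ hq0 hq1
    intro s
    show x s - y s = _
    rw [pmfExp_sub, hxdef, hydef]
    ring
  rw [hx, hy, hxy]
  exact abs_norm_sub_norm_le x y

lemma pmfVar_nonneg {S : Type*} [Fintype S] (q f : S → ℝ) (hq0 : ∀ s, 0 ≤ q s)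
    (hq1 : ∑ s, q s = 1) : 0 ≤ pmfVar q f := by
  rw [pmfVar_eq_sum q f hq1]
  exact Finset.sum_nonneg fun s _ => mul_nonneg (hq0 s) (sq_nonneg _)

lemma sqrt_mul_le_half_add (a b : ℝ) (ha : 0 ≤ a) (hb : 0 ≤ b) :
    Real.sqrt (a * b) ≤ (a + b) / 2 := by
  rw [show (a + b) / 2 = Real.sqrt (((a + b) / 2) ^ 2) from
    (Real.sqrt_sq (by linarith)).symm]
  apply Real.sqrt_le_sqrt
  nlinarith [sq_nonneg (a - b)]

/-- Variance difference is upper bounded by value difference: if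
`|√(Var_p(u)) − √(Var_{p̄}(u))| ≤ √(12B²L/n)` and `0 ≤ v ≤ u ≤ B`, then
`√(2L)·|√(Var_{p̄}(v)) − √(Var_p(u))|/√n ≤ (1/α)·E_{p̄}[u − v] + (5 + α/2)·BL/n`. -/
theorem variance_diff_le_value_diff {S : Type*} [Fintype S]
    (p pbar : S → ℝ)
    (hp0 : ∀ s, 0 ≤ p s) (hp1 : ∑ s, p s = 1)
    (hpbar0 : ∀ s, 0 ≤ pbar s) (hpbar1 : ∑ s, pbar s = 1)
    (B L n α : ℝ) (hB : 0 ≤ B) (hL : 0 ≤ L) (hn : 1 ≤ n) (hα : 0 < α)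
    (u v : S → ℝ) (hbound : ∀ s, 0 ≤ v s ∧ v s ≤ u s ∧ u s ≤ B)
    (hconc : |Real.sqrt (pmfVar p u) - Real.sqrt (pmfVar pbar u)| ≤
      Real.sqrt (12 * B ^ 2 * L / n)) :
    Real.sqrt (2 * L) * |Real.sqrt (pmfVar pbar v) - Real.sqrt (pmfVar p u)| / Real.sqrt n ≤
      (1 / α) * pmfExp pbar (fun s => u s - v s) + (5 + α / 2) * B * L / n := by
  have hn0 : (0:ℝ) < n := lt_of_lt_of_le one_pos hn
  set D := pmfExp pbar (fun s => u s - v s) with hDdef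
  have hD0 : 0 ≤ D := Finset.sum_nonneg fun s _ => by
    show 0 ≤ pbar s * (u s - v s)
    exact mul_nonneg (hpbar0 s) (by linarith [(hbound s).2.1])
  have hBD : 0 ≤ B * D := mul_nonneg hB hD0
  have hL2 : (0:ℝ) ≤ 2 * L := by linarith
  have h1 : |Real.sqrt (pmfVar pbar v) - Real.sqrt (pmfVar pbar u)| ≤ Real.sqrt (B * D) := by
    refine (sd_triangle pbar v u hpbar0 hpbar1).trans (Real.sqrt_le_sqrt ?_)
    have h2 : pmfVar pbar (fun s => v s - u s) ≤ pmfExp pbar (fun s => (v s - u s) ^ 2) := by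
      unfold pmfVar
      nlinarith [sq_nonneg (pmfExp pbar (fun s => v s - u s))]
    refine h2.trans ?_
    have hBD' : B * D = ∑ s, pbar s * (B * (u s - v s)) := by
      rw [hDdef]; unfold pmfExp; rw [Finset.mul_sum]
      exact Finset.sum_congr rfl fun s _ => by ring
    rw [hBD']
    unfold pmfExp
    apply Finset.sum_le_sum
    intro s _
    apply mul_le_mul_of_nonneg_left _ (hpbar0 s)
    obtain ⟨hb1, hb2, hb3⟩ := hbound s
    show (v s - u s) ^ 2 ≤ B * (u s - v s)
    nlinarith
  have habs : |Real.sqrt (pmfVar pbar v) - Real.sqrt (pmfVar p u)|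
      ≤ Real.sqrt (B * D) + Real.sqrt (12 * B ^ 2 * L / n) := by
    calc |Real.sqrt (pmfVar pbar v) - Real.sqrt (pmfVar p u)|
        ≤ |Real.sqrt (pmfVar pbar v) - Real.sqrt (pmfVar pbar u)|
          + |Real.sqrt (pmfVar pbar u) - Real.sqrt (pmfVar p u)| := abs_sub_le _ _ _
      _ ≤ _ := add_le_add h1 (by rw [abs_sub_comm]; exact hconc)
  have e1 : Real.sqrt (2 * L) * Real.sqrt (B * D) / Real.sqrt n
      = Real.sqrt (2 * L * (B * D) / n) := by
    rw [← Real.sqrt_mul hL2, Real.sqrt_div (by positivity)]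
  have e2 : Real.sqrt (2 * L) * Real.sqrt (12 * B ^ 2 * L / n) / Real.sqrt n
      = Real.sqrt (2 * L * (12 * B ^ 2 * L / n) / n) := by
    rw [← Real.sqrt_mul hL2, Real.sqrt_div (by positivity)]
  have hb1 : Real.sqrt (2 * L * (B * D) / n) ≤ (2 * D / α + α * B * L / n) / 2 := by
    have hq : 2 * L * (B * D) / n = (2 * D / α) * (α * B * L / n) := by
      field_simp
    rw [hq]
    exact sqrt_mul_le_half_add _ _ (by positivity) (by positivity)
  have hb2 : Real.sqrt (2 * L * (12 * B ^ 2 * L / n) / n) ≤ 5 * B * L / n := by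
    have hle : 2 * L * (12 * B ^ 2 * L / n) / n ≤ (5 * B * L / n) ^ 2 := by
      have hq : 2 * L * (12 * B ^ 2 * L / n) / n = 24 * (B * L / n) ^ 2 := by ring
      have hq2 : (5 * B * L / n) ^ 2 = 25 * (B * L / n) ^ 2 := by ring
      rw [hq, hq2]
      nlinarith [sq_nonneg (B * L / n)]
    calc Real.sqrt (2 * L * (12 * B ^ 2 * L / n) / n)
        ≤ Real.sqrt ((5 * B * L / n) ^ 2) := Real.sqrt_le_sqrt hle
      _ = 5 * B * L / n := Real.sqrt_sq (by positivity)
  calc Real.sqrt (2 * L) * |Real.sqrt (pmfVar pbar v) - Real.sqrt (pmfVar p u)| / Real.sqrt n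
      ≤ Real.sqrt (2 * L) * (Real.sqrt (B * D) + Real.sqrt (12 * B ^ 2 * L / n)) / Real.sqrt n := by
        gcongr
    _ = Real.sqrt (2 * L) * Real.sqrt (B * D) / Real.sqrt n
        + Real.sqrt (2 * L) * Real.sqrt (12 * B ^ 2 * L / n) / Real.sqrt n := by ring
    _ ≤ (2 * D / α + α * B * L / n) / 2 + 5 * B * L / n := by
        rw [e1, e2]; exact add_le_add hb1 hb2
    _ = (1 / α) * D + (5 + α / 2) * B * L / n := by field_simp; ring
end

section
/- For every deterministic learner as defined in the context and every action a ∈ A, it holds that E_{P_a}[N_a] ≤ E_{P_unif}[N_a] + ε K √(E_{P_unif}[N_a] / B). -/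
open Finset

/-- The action played by a deterministic learner `f` in episode `k`, given the cost
sequence `c` (it depends only on the costs of episodes before `k`). -/
def learnerAct {K : ℕ} {A : Type*} (f : (k : Fin K) → (Fin (k : ℕ) → Bool) → A)
    (c : Fin K → Bool) (k : Fin K) : A :=
  f k (fun i => c ⟨(i : ℕ), i.isLt.trans k.isLt⟩)

/-- The number of episodes in which the learner `f` plays action `a` on cost sequence `c`. -/
def learnerCount {K : ℕ} {A : Type*} [DecidableEq A]
    (f : (k : Fin K) → (Fin (k : ℕ) → Bool) → A) (a : A) (c : Fin K → Bool) : ℕ :=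
  (univ.filter fun k => learnerAct f c k = a).card

/-- The probability of the cost sequence `c` under the model in which the cost of episode `k`
is Bernoulli with mean `B` if the special action `a` is played and mean `B + ε` otherwise. -/
noncomputable def probSpecial {K : ℕ} {A : Type*} [DecidableEq A]
    (B ε : ℝ) (f : (k : Fin K) → (Fin (k : ℕ) → Bool) → A) (a : A)
    (c : Fin K → Bool) : ℝ :=
  ∏ k : Fin K,
    (if c k then (if learnerAct f c k = a then B else B + ε)
     else 1 - (if learnerAct f c k = a then B else B + ε))

/-- The probability of the cost sequence `c` under i.i.d. Bernoulli(`B + ε`) costs. -/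
noncomputable def probUnif (K : ℕ) (B ε : ℝ) (c : Fin K → Bool) : ℝ :=
  ∏ _k : Fin K, (if c _k then B + ε else 1 - (B + ε))



noncomputable def pinPhi (t : ℝ) : ℝ := t * Real.log t + 1 - t - 3*(t-1)^2/(2*t+4)
noncomputable def pinPsi (t : ℝ) : ℝ := Real.log t - 6*(t-1)*(t+5)/(2*t+4)^2

lemma lin_hasDeriv (t : ℝ) : HasDerivAt (fun t : ℝ => 2*t+4) 2 t := by
  simpa using ((hasDerivAt_id t).const_mul 2).add_const 4

lemma pinPsi_hasDeriv {t : ℝ} (ht : 0 < t) :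
    HasDerivAt pinPsi (1/t - 216/(2*t+4)^3) t := by
  have hd : (2*t+4) ≠ 0 := by positivity
  have h1 : HasDerivAt Real.log t⁻¹ t := Real.hasDerivAt_log ht.ne'
  have hnum : HasDerivAt (fun t : ℝ => 6*(t-1)*(t+5)) (6*(2*t+4)) t := by
    have : HasDerivAt (fun t : ℝ => 6*(t-1)*(t+5)) (6*1*(t+5) + 6*(t-1)*1) t :=
      (((hasDerivAt_id t).sub_const 1).const_mul 6).mul ((hasDerivAt_id t).add_const 5)
    convert this using 1; ring
  have hden : HasDerivAt (fun t : ℝ => (2*t+4)^2) (2*(2*t+4)^(2-1)*2) t := (lin_hasDeriv t).pow 2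
  have h2 := hnum.div hden (by positivity)
  have h3 := h1.sub h2
  have heq : t⁻¹ - (6*(2*t+4) * (2*t+4)^2 - 6*(t-1)*(t+5) * (2*(2*t+4)^(2-1)*2)) / ((2*t+4)^2)^2
      = 1/t - 216/(2*t+4)^3 := by
    field_simp
    ring
  exact heq ▸ h3

lemma pinPhi_hasDeriv {t : ℝ} (ht : 0 < t) :
    HasDerivAt pinPhi (pinPsi t) t := by
  have hd : (2*t+4) ≠ 0 := by positivity
  have h1 : HasDerivAt (fun x : ℝ => x * Real.log x) (Real.log t + 1) t :=
    Real.hasDerivAt_mul_log ht.ne'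
  have hnum : HasDerivAt (fun t : ℝ => 3*(t-1)^2) (3*(2*(t-1)^(2-1)*1)) t :=
    (((hasDerivAt_id t).sub_const 1).pow 2).const_mul 3
  have h2 := hnum.div (lin_hasDeriv t) (by positivity)
  have h3 := ((h1.add_const 1).sub (hasDerivAt_id t)).sub h2
  have heq : Real.log t + 1 - 1 - (3*(2*(t-1)^(2-1)*1) * (2*t+4) - 3*(t-1)^2 * 2) / (2*t+4)^2
      = pinPsi t := by
    simp only [pinPsi]
    field_simp
    ring
  exact heq ▸ h3

lemma pinPhi_nonneg {t : ℝ} (ht : 0 < t) : 0 ≤ pinPhi t := by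
  have hpsi1 : pinPsi 1 = 0 := by simp [pinPsi]
  have hmono : MonotoneOn pinPsi (Set.Ioi (0:ℝ)) := by
    apply monotoneOn_of_hasDerivWithinAt_nonneg (convex_Ioi 0)
      (fun x hx => (pinPsi_hasDeriv hx).continuousAt.continuousWithinAt)
      (f' := fun x => 1/x - 216/(2*x+4)^3)
    · intro x hx
      rw [interior_Ioi] at hx
      exact (pinPsi_hasDeriv hx).hasDerivWithinAt
    · intro x hx
      rw [interior_Ioi] at hx
      rw [Set.mem_Ioi] at hx
      rw [sub_nonneg, div_le_div_iff₀ (by positivity) (by positivity)]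
      nlinarith [sq_nonneg (x-1), sq_nonneg (x+1), hx.le, mul_pos hx hx]
  have hphi1 : pinPhi 1 = 0 := by simp [pinPhi]
  rcases le_or_gt 1 t with h1 | h1
  · have hm : MonotoneOn pinPhi (Set.Ici (1:ℝ)) := by
      apply monotoneOn_of_hasDerivWithinAt_nonneg (convex_Ici 1)
        (fun x hx => (pinPhi_hasDeriv (lt_of_lt_of_le one_pos (Set.mem_Ici.1 hx))).continuousAt.continuousWithinAt)
        (f' := pinPsi)
      · intro x hx
        rw [interior_Ici] at hx
        exact (pinPhi_hasDeriv (lt_trans one_pos (Set.mem_Ioi.1 hx))).hasDerivWithinAt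
      · intro x hx
        rw [interior_Ici] at hx
        rw [Set.mem_Ioi] at hx
        have := hmono (Set.mem_Ioi.2 one_pos) (Set.mem_Ioi.2 (lt_trans one_pos hx)) hx.le
        rw [hpsi1] at this; exact this
    have := hm (Set.mem_Ici.2 le_rfl) (Set.mem_Ici.2 h1) h1
    rw [hphi1] at this; exact this
  · have hm : AntitoneOn pinPhi (Set.Ioc (0:ℝ) 1) := by
      apply antitoneOn_of_hasDerivWithinAt_nonpos (convex_Ioc 0 1)
        (fun x hx => (pinPhi_hasDeriv hx.1).continuousAt.continuousWithinAt)
        (f' := pinPsi)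
      · intro x hx
        rw [interior_Ioc] at hx
        exact (pinPhi_hasDeriv hx.1).hasDerivWithinAt
      · intro x hx
        rw [interior_Ioc] at hx
        have := hmono (Set.mem_Ioi.2 hx.1) (Set.mem_Ioi.2 one_pos) hx.2.le
        rw [hpsi1] at this; exact this
    have := hm (Set.mem_Ioc.2 ⟨ht, h1.le⟩) (Set.mem_Ioc.2 ⟨one_pos, le_rfl⟩) h1.le
    rw [hphi1] at this; exact this

lemma pinsker_pointwise {x y : ℝ} (hx : 0 < x) (hy : 0 < y) :
    3*(x-y)^2/(2*x+4*y) ≤ x * Real.log (x/y) + y - x := by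
  have h := pinPhi_nonneg (div_pos hx hy)
  have hid : x * Real.log (x/y) + y - x - 3*(x-y)^2/(2*x+4*y) = y * pinPhi (x/y) := by
    simp only [pinPhi]
    field_simp
  nlinarith [mul_nonneg hy.le h]



section Cond

variable {K : ℕ}

/-- Integrating out coordinate `j`: if `F`, `x`, `y` do not depend on coordinate `j`, then
conditioning on coordinate `j` gives the average of `x` and `y`. -/
lemma cond_sum (j : Fin K) (F x y : (Fin K → Bool) → ℝ)
    (hF : ∀ c b, F (Function.update c j b) = F c)
    (hx : ∀ c b, x (Function.update c j b) = x c)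
    (hy : ∀ c b, y (Function.update c j b) = y c) :
    2 * ∑ c : Fin K → Bool, F c * (if c j then x c else y c)
      = ∑ c : Fin K → Bool, F c * (x c + y c) := by
  classical
  set e := (Equiv.funSplitAt j Bool).symm with he
  have key : ∀ (b : Bool) (r : { i // i ≠ j } → Bool),
      e (b, r) = Function.update (e (false, r)) j b := by
    intro b r
    funext i
    by_cases h : i = j
    · subst h; simp [he, Equiv.funSplitAt, Equiv.piSplitAt, Function.update_self]
    · simp [he, Equiv.funSplitAt, Equiv.piSplitAt, h, Function.update_of_ne h]
  have hej : ∀ (b : Bool) (r : { i // i ≠ j } → Bool), e (b, r) j = b := by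
    intro b r; rw [key]; simp
  have hFe : ∀ b r, F (e (b, r)) = F (e (false, r)) := fun b r => by rw [key, hF]
  have hxe : ∀ b r, x (e (b, r)) = x (e (false, r)) := fun b r => by rw [key, hx]
  have hye : ∀ b r, y (e (b, r)) = y (e (false, r)) := fun b r => by rw [key, hy]
  rw [← Equiv.sum_comp e (fun c => F c * (if c j then x c else y c)),
      ← Equiv.sum_comp e (fun c => F c * (x c + y c))]
  simp only [Fintype.sum_prod_type, Fintype.sum_bool]
  simp only [hej, if_true, if_false, hFe, hxe, hye]
  rw [← Finset.sum_add_distrib, Finset.mul_sum, ← Finset.sum_add_distrib]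
  apply Finset.sum_congr rfl
  intro r _
  simp only [Bool.false_eq_true, if_false]
  ring

/-- A predictable product of Bernoulli factors sums to `1` over the cube. -/
lemma sum_pred_prod (θ : Fin K → (Fin K → Bool) → ℝ)
    (hθ : ∀ (k j : Fin K) (b : Bool) (c : Fin K → Bool),
      (k : ℕ) ≤ (j : ℕ) → θ k (Function.update c j b) = θ k c) :
    ∑ c : Fin K → Bool, ∏ k, (if c k then θ k c else 1 - θ k c) = 1 := by
  classical
  suffices h : ∀ m, m ≤ K → ∑ c : Fin K → Bool,
      ∏ k ∈ univ.filter (fun k : Fin K => (k : ℕ) < m), (if c k then θ k c else 1 - θ k c)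
      = 2 ^ (K - m) by
    have hK := h K le_rfl
    have : univ.filter (fun k : Fin K => (k : ℕ) < K) = univ := by
      ext k; simp [k.isLt]
    rw [this, Nat.sub_self, pow_zero] at hK
    exact hK
  intro m
  induction m with
  | zero =>
    intro _
    have : univ.filter (fun k : Fin K => (k : ℕ) < 0) = (∅ : Finset (Fin K)) := by
      ext k; simp
    simp only [this, Finset.prod_empty, Finset.sum_const, Finset.card_univ, nsmul_eq_mul, mul_one]
    simp [Nat.sub_zero]
  | succ n ih =>
    intro hm
    have hn : n < K := hm
    set j : Fin K := ⟨n, hn⟩ with hj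
    have hset : univ.filter (fun k : Fin K => (k : ℕ) < n + 1)
        = insert j (univ.filter (fun k : Fin K => (k : ℕ) < n)) := by
      ext k
      simp only [Finset.mem_filter, Finset.mem_univ, true_and, Finset.mem_insert,
        Nat.lt_succ_iff_lt_or_eq, Fin.ext_iff, hj]
      tauto
    have hnotmem : j ∉ univ.filter (fun k : Fin K => (k : ℕ) < n) := by simp [hj]
    have hprod : ∀ c : Fin K → Bool,
        ∏ k ∈ univ.filter (fun k : Fin K => (k : ℕ) < n + 1), (if c k then θ k c else 1 - θ k c)
        = (∏ k ∈ univ.filter (fun k : Fin K => (k : ℕ) < n), (if c k then θ k c else 1 - θ k c))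
          * (if c j then θ j c else 1 - θ j c) := by
      intro c
      rw [hset, Finset.prod_insert hnotmem, mul_comm]
    simp only [hprod]
    set F : (Fin K → Bool) → ℝ :=
      fun c => ∏ k ∈ univ.filter (fun k : Fin K => (k : ℕ) < n), (if c k then θ k c else 1 - θ k c)
      with hFdef
    have hF : ∀ c b, F (Function.update c j b) = F c := by
      intro c b
      apply Finset.prod_congr rfl
      intro k hk
      have hkn : (k : ℕ) < n := (Finset.mem_filter.1 hk).2
      have hkj : k ≠ j := by
        intro h; rw [h, hj] at hkn; exact absurd hkn (lt_irrefl n)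
      rw [Function.update_of_ne hkj, hθ k j b c (le_of_lt hkn)]
    have hx : ∀ c b, θ j (Function.update c j b) = θ j c := fun c b => hθ j j b c le_rfl
    have hy : ∀ c b, (1 - θ j (Function.update c j b)) = 1 - θ j c := fun c b => by
      rw [hθ j j b c le_rfl]
    have hcond := cond_sum j F (θ j) (fun c => 1 - θ j c) hF hx hy
    have hsum : ∑ c : Fin K → Bool, F c * (θ j c + (1 - θ j c)) = ∑ c : Fin K → Bool, F c := by
      apply Finset.sum_congr rfl; intro c _; ring
    rw [hsum, ih (le_of_lt hn)] at hcond
    have hpow : (2 : ℝ) ^ (K - n) = 2 * 2 ^ (K - (n + 1)) := by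
      rw [← pow_succ']
      congr 1
      omega
    rw [hpow] at hcond
    have h2 : (2 : ℝ) ≠ 0 := two_ne_zero
    exact mul_left_cancel₀ h2 hcond

end Cond



/-- learnerAct only depends on earlier coordinates. -/
lemma learnerAct_update {K : ℕ} {A : Type*} (f : (k : Fin K) → (Fin (k : ℕ) → Bool) → A)
    (c : Fin K → Bool) (j k : Fin K) (b : Bool) (h : (k : ℕ) ≤ (j : ℕ)) :
    learnerAct f (Function.update c j b) k = learnerAct f c k := by
  unfold learnerAct
  congr 1
  funext i
  have hne : (⟨(i : ℕ), i.isLt.trans k.isLt⟩ : Fin K) ≠ j := by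
    intro hcon
    have : (i : ℕ) = (j : ℕ) := congrArg Fin.val hcon
    omega
  exact Function.update_of_ne hne _ _

/-- Conditional factorization for the i.i.d. measure: if `g` does not depend on
coordinate `k`, the factor at coordinate `k` integrates out. -/
lemma unif_cond {K : ℕ} (B ε : ℝ) (k : Fin K) (g : (Fin K → Bool) → ℝ) (lT lF : ℝ)
    (hg : ∀ c b, g (Function.update c k b) = g c) :
    ∑ c : Fin K → Bool, probUnif K B ε c * (g c * (if c k then lT else lF))
      = ((B + ε) * lT + (1 - (B + ε)) * lF) * ∑ c : Fin K → Bool, probUnif K B ε c * g c := by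
  classical
  set P' : (Fin K → Bool) → ℝ :=
    fun c => ∏ i ∈ univ.erase k, (if c i then B + ε else 1 - (B + ε)) with hP'
  have hsplit : ∀ c : Fin K → Bool,
      probUnif K B ε c = (if c k then B + ε else 1 - (B + ε)) * P' c := by
    intro c
    rw [probUnif]
    exact (Finset.mul_prod_erase univ _ (mem_univ k)).symm
  have hP'upd : ∀ c b, P' (Function.update c k b) = P' c := by
    intro c b
    apply Finset.prod_congr rfl
    intro i hi
    rw [Function.update_of_ne (Finset.ne_of_mem_erase hi)]
  have hF : ∀ c b, (P' (Function.update c k b) * g (Function.update c k b)) = P' c * g c := by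
    intro c b; rw [hP'upd, hg]
  have h1 : ∑ c : Fin K → Bool, probUnif K B ε c * (g c * (if c k then lT else lF))
      = ∑ c : Fin K → Bool, (P' c * g c) *
          (if c k then (B + ε) * lT else (1 - (B + ε)) * lF) := by
    apply Finset.sum_congr rfl
    intro c _
    rw [hsplit c]
    cases hck : c k <;> simp [hck] <;> ring
  have h2 : ∑ c : Fin K → Bool, probUnif K B ε c * g c
      = ∑ c : Fin K → Bool, (P' c * g c) *
          (if c k then (B + ε) else (1 - (B + ε))) := by
    apply Finset.sum_congr rfl
    intro c _
    rw [hsplit c]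
    cases hck : c k <;> simp [hck] <;> ring
  have hc1 := cond_sum k (fun c => P' c * g c) (fun _ => (B + ε) * lT)
    (fun _ => (1 - (B + ε)) * lF) hF (fun _ _ => rfl) (fun _ _ => rfl)
  have hc2 := cond_sum k (fun c => P' c * g c) (fun _ => (B + ε))
    (fun _ => (1 - (B + ε))) hF (fun _ _ => rfl) (fun _ _ => rfl)
  rw [h1, h2]
  have key : 2 * ∑ c : Fin K → Bool, (P' c * g c) *
      (if c k then (B + ε) * lT else (1 - (B + ε)) * lF)
      = 2 * (((B + ε) * lT + (1 - (B + ε)) * lF) *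
          ∑ c : Fin K → Bool, (P' c * g c) * (if c k then (B + ε) else (1 - (B + ε)))) := by
    rw [hc1]
    rw [show ((B + ε) * lT + (1 - (B + ε)) * lF) *
        ∑ c : Fin K → Bool, (P' c * g c) * (if c k then (B + ε) else (1 - (B + ε)))
        = (((B + ε) * lT + (1 - (B + ε)) * lF) / 2) *
          (2 * ∑ c : Fin K → Bool, (P' c * g c) * (if c k then (B + ε) else (1 - (B + ε))))
        from by ring, hc2]
    rw [Finset.mul_sum, Finset.mul_sum]
    apply Finset.sum_congr rfl
    intro c _
    ring
  linarith


/-- For any deterministic learner and any action `a`,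
`E_{P_a}[N_a] ≤ E_{P_unif}[N_a] + ε K √(E_{P_unif}[N_a] / B)`. -/
theorem special_action_count_bound {K : ℕ} (hK : 1 ≤ K)
    {A : Type*} [Fintype A] [DecidableEq A] [Nonempty A]
    (B ε : ℝ) (hB0 : 0 < B) (hB : B ≤ 1 / 2) (hε0 : 0 < ε) (hε : ε < 1 / 8)
    (f : (k : Fin K) → (Fin (k : ℕ) → Bool) → A) (a : A) :
    (∑ c : Fin K → Bool, probSpecial B ε f a c * (learnerCount f a c : ℝ)) ≤
      (∑ c : Fin K → Bool, probUnif K B ε c * (learnerCount f a c : ℝ)) +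
        ε * K * Real.sqrt
          ((∑ c : Fin K → Bool, probUnif K B ε c * (learnerCount f a c : ℝ)) / B) := by
  classical
  have hμ0 : (0:ℝ) < B + ε := by linarith
  have hμ1 : B + ε < 1 := by linarith
  have h1B : (0:ℝ) < 1 - B := by linarith
  have h1μ : (0:ℝ) < 1 - (B + ε) := by linarith
  set p : (Fin K → Bool) → ℝ := probUnif K B ε with hp
  set q : (Fin K → Bool) → ℝ := probSpecial B ε f a with hq
  set N : (Fin K → Bool) → ℝ := fun c => (learnerCount f a c : ℝ) with hN
  -- sums to one
  have hsump : ∑ c : Fin K → Bool, p c = 1 := by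
    rw [hp]
    exact sum_pred_prod (fun _ _ => B + ε) (fun _ _ _ _ _ => rfl)
  have hsumq : ∑ c : Fin K → Bool, q c = 1 := by
    rw [hq]
    unfold probSpecial
    exact sum_pred_prod (fun k c => if learnerAct f c k = a then B else B + ε)
      (fun k j b c hkj => by simp only [learnerAct_update f c j k b hkj])
  -- positivity
  have hp0 : ∀ c, 0 < p c := by
    intro c
    apply Finset.prod_pos
    intro k _
    cases hck : c k <;> simp [hck] <;> linarith
  have hq0 : ∀ c, 0 < q c := by
    intro c
    apply Finset.prod_pos
    intro k _
    by_cases hact : learnerAct f c k = a <;> cases hck : c k <;> simp [hck, hact] <;> linarith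
  -- log-likelihood ratio decomposition
  set lT : ℝ := Real.log (B + ε) - Real.log B with hlT
  set lF : ℝ := Real.log (1 - (B + ε)) - Real.log (1 - B) with hlF
  set klstep : ℝ := (B + ε) * lT + (1 - (B + ε)) * lF with hklstepdef
  have hlog : ∀ c, Real.log (p c) - Real.log (q c)
      = ∑ k : Fin K, (if learnerAct f c k = a then (1:ℝ) else 0) * (if c k then lT else lF) := by
    intro c
    rw [hp, hq]
    unfold probUnif probSpecial
    rw [Real.log_prod (fun k _ => by cases hck : c k <;> simp [hck] <;> linarith),
        Real.log_prod (fun k _ => by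
          by_cases hact : learnerAct f c k = a <;> cases hck : c k <;>
            simp [hck, hact] <;> linarith),
        ← Finset.sum_sub_distrib]
    apply Finset.sum_congr rfl
    intro k _
    by_cases hact : learnerAct f c k = a <;> cases hck : c k <;> simp [hck, hact, hlT, hlF]
  have hNsum : ∀ c, N c = ∑ k : Fin K, (if learnerAct f c k = a then (1:ℝ) else 0) := by
    intro c
    show ((univ.filter fun k => learnerAct f c k = a).card : ℝ) = _
    rw [Finset.card_filter]
    push_cast
    rfl
  set E : ℝ := ∑ c : Fin K → Bool, p c * N c with hE
  have hE0 : 0 ≤ E := by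
    rw [hE]
    apply Finset.sum_nonneg
    intro c _
    exact mul_nonneg (hp0 c).le (by simp only [hN]; exact Nat.cast_nonneg _)
  set KL : ℝ := ∑ c : Fin K → Bool, p c * (Real.log (p c) - Real.log (q c)) with hKL
  have hKLeq : KL = klstep * E := by
    rw [hKL]
    calc ∑ c : Fin K → Bool, p c * (Real.log (p c) - Real.log (q c))
        = ∑ c : Fin K → Bool, ∑ k : Fin K,
            p c * ((if learnerAct f c k = a then (1:ℝ) else 0) * (if c k then lT else lF)) := by
          apply Finset.sum_congr rfl
          intro c _
          rw [hlog c, Finset.mul_sum]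
      _ = ∑ k : Fin K, ∑ c : Fin K → Bool,
            p c * ((if learnerAct f c k = a then (1:ℝ) else 0) * (if c k then lT else lF)) :=
          Finset.sum_comm
      _ = ∑ k : Fin K, klstep *
            (∑ c : Fin K → Bool, p c * (if learnerAct f c k = a then (1:ℝ) else 0)) := by
          apply Finset.sum_congr rfl
          intro k _
          exact unif_cond B ε k _ lT lF
            (fun c b => by rw [learnerAct_update f c k k b le_rfl])
      _ = klstep * ∑ c : Fin K → Bool,
            p c * (∑ k : Fin K, (if learnerAct f c k = a then (1:ℝ) else 0)) := by
          rw [← Finset.mul_sum, Finset.sum_comm]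
          congr 1
          apply Finset.sum_congr rfl
          intro c _
          rw [Finset.mul_sum]
      _ = klstep * E := by
          rw [hE]
          congr 1
          apply Finset.sum_congr rfl
          intro c _
          rw [hNsum c]
  -- bound on klstep
  have hklstep : klstep ≤ 2 * ε ^ 2 / B := by
    have hlTb : lT ≤ ε / B := by
      have h1 : lT = Real.log ((B + ε) / B) := by
        rw [hlT, Real.log_div hμ0.ne' hB0.ne']
      have h2 := Real.log_le_sub_one_of_pos (div_pos hμ0 hB0)
      rw [h1]
      have h3 : (B + ε) / B - 1 = ε / B := by field_simp; ring
      linarith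
    have hlFb : lF ≤ -(ε / (1 - B)) := by
      have h1 : lF = Real.log ((1 - (B + ε)) / (1 - B)) := by
        rw [hlF, Real.log_div h1μ.ne' h1B.ne']
      have h2 := Real.log_le_sub_one_of_pos (div_pos h1μ h1B)
      rw [h1]
      have h3 : (1 - (B + ε)) / (1 - B) - 1 = -(ε / (1 - B)) := by
        field_simp
        ring
      linarith
    have hstep : klstep ≤ (B + ε) * (ε / B) + (1 - (B + ε)) * (-(ε / (1 - B))) := by
      rw [hklstepdef]
      have := mul_le_mul_of_nonneg_left hlTb hμ0.le
      have := mul_le_mul_of_nonneg_left hlFb h1μ.le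
      linarith
    have hid : (B + ε) * (ε / B) + (1 - (B + ε)) * (-(ε / (1 - B))) = ε ^ 2 / (B * (1 - B)) := by
      field_simp
      ring
    have hfin : ε ^ 2 / (B * (1 - B)) ≤ 2 * ε ^ 2 / B := by
      rw [div_le_div_iff₀ (by positivity) hB0]
      nlinarith [mul_nonneg (mul_nonneg (sq_nonneg ε) hB0.le) (show (0:ℝ) ≤ 1 - 2*B by linarith)]
    linarith
  have hKLbound : KL ≤ 2 * ε ^ 2 / B * E := by
    rw [hKLeq]
    exact mul_le_mul_of_nonneg_right hklstep hE0
  -- Pinsker via Cauchy-Schwarz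
  have hpoint : ∀ c : Fin K → Bool, 3 * (p c - q c) ^ 2 / (2 * p c + 4 * q c)
      ≤ p c * (Real.log (p c) - Real.log (q c)) + q c - p c := by
    intro c
    have := pinsker_pointwise (hp0 c) (hq0 c)
    rwa [Real.log_div (hp0 c).ne' (hq0 c).ne'] at this
  have hquad3 : ∑ c : Fin K → Bool, 3 * (p c - q c) ^ 2 / (2 * p c + 4 * q c) ≤ KL := by
    calc ∑ c : Fin K → Bool, 3 * (p c - q c) ^ 2 / (2 * p c + 4 * q c)
        ≤ ∑ c : Fin K → Bool, (p c * (Real.log (p c) - Real.log (q c)) + q c - p c) :=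
          Finset.sum_le_sum (fun c _ => hpoint c)
      _ = KL + (∑ c : Fin K → Bool, q c) - ∑ c : Fin K → Bool, p c := by
          rw [hKL, ← Finset.sum_add_distrib, ← Finset.sum_sub_distrib]
      _ = KL := by rw [hsump, hsumq]; ring
  set L : ℝ := ∑ c : Fin K → Bool, |p c - q c| with hL
  have hL0 : 0 ≤ L := Finset.sum_nonneg (fun c _ => abs_nonneg _)
  have hd0 : ∀ c : Fin K → Bool, (0:ℝ) < 2 * p c + 4 * q c := by
    intro c
    have := hp0 c; have := hq0 c
    linarith
  have hCS : L ^ 2 ≤ (∑ c : Fin K → Bool, (p c - q c) ^ 2 / (2 * p c + 4 * q c))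
      * ∑ c : Fin K → Bool, (2 * p c + 4 * q c) := by
    have heq : ∀ c : Fin K → Bool, |p c - q c|
        = (|p c - q c| / Real.sqrt (2 * p c + 4 * q c)) * Real.sqrt (2 * p c + 4 * q c) := by
      intro c
      rw [div_mul_cancel₀]
      exact (Real.sqrt_pos.2 (hd0 c)).ne'
    rw [hL]
    rw [Finset.sum_congr rfl (fun c _ => heq c)]
    refine le_trans (Finset.sum_mul_sq_le_sq_mul_sq univ _ _) (le_of_eq ?_)
    congr 1
    · apply Finset.sum_congr rfl
      intro c _
      rw [div_pow, sq_abs, Real.sq_sqrt (hd0 c).le]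
    · apply Finset.sum_congr rfl
      intro c _
      exact Real.sq_sqrt (hd0 c).le
  have hsum6 : ∑ c : Fin K → Bool, (2 * p c + 4 * q c) = 6 := by
    rw [Finset.sum_add_distrib, ← Finset.mul_sum, ← Finset.mul_sum, hsump, hsumq]
    norm_num
  have hLsq : L ^ 2 ≤ 4 * ε ^ 2 * (E / B) := by
    have h1 : ∑ c : Fin K → Bool, (p c - q c) ^ 2 / (2 * p c + 4 * q c) ≤ KL / 3 := by
      have : (3:ℝ) * ∑ c : Fin K → Bool, (p c - q c) ^ 2 / (2 * p c + 4 * q c)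
          = ∑ c : Fin K → Bool, 3 * (p c - q c) ^ 2 / (2 * p c + 4 * q c) := by
        rw [Finset.mul_sum]
        apply Finset.sum_congr rfl
        intro c _
        ring
      linarith [hquad3, this ▸ hquad3]
    have h2 : L ^ 2 ≤ KL / 3 * 6 := by
      calc L ^ 2 ≤ (∑ c : Fin K → Bool, (p c - q c) ^ 2 / (2 * p c + 4 * q c))
          * ∑ c : Fin K → Bool, (2 * p c + 4 * q c) := hCS
        _ = (∑ c : Fin K → Bool, (p c - q c) ^ 2 / (2 * p c + 4 * q c)) * 6 := by rw [hsum6]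
        _ ≤ KL / 3 * 6 := by linarith
    have h3 : KL / 3 * 6 = 2 * KL := by ring
    have h4 : 2 * KL ≤ 2 * (2 * ε ^ 2 / B * E) := by linarith
    have h5 : 2 * (2 * ε ^ 2 / B * E) = 4 * ε ^ 2 * (E / B) := by
      field_simp
      ring
    linarith
  have hEB : 0 ≤ E / B := div_nonneg hE0 hB0.le
  have hLle : L ≤ 2 * ε * Real.sqrt (E / B) := by
    have hR0 : 0 ≤ 2 * ε * Real.sqrt (E / B) :=
      mul_nonneg (by linarith) (Real.sqrt_nonneg _)
    have hsq : L ^ 2 ≤ (2 * ε * Real.sqrt (E / B)) ^ 2 := by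
      rw [mul_pow, mul_pow, Real.sq_sqrt hEB]
      calc L ^ 2 ≤ 4 * ε ^ 2 * (E / B) := hLsq
        _ = 2 ^ 2 * ε ^ 2 * (E / B) := by ring
    calc L = Real.sqrt (L ^ 2) := (Real.sqrt_sq hL0).symm
      _ ≤ Real.sqrt ((2 * ε * Real.sqrt (E / B)) ^ 2) := Real.sqrt_le_sqrt hsq
      _ = 2 * ε * Real.sqrt (E / B) := Real.sqrt_sq hR0
  -- total variation bound on the expected count difference
  have hNb : ∀ c : Fin K → Bool, |N c - K / 2| ≤ K / 2 := by
    intro c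
    have hle : learnerCount f a c ≤ K := by
      unfold learnerCount
      calc (univ.filter fun k => learnerAct f c k = a).card ≤ (univ : Finset (Fin K)).card :=
            Finset.card_filter_le _ _
        _ = K := by rw [Finset.card_univ, Fintype.card_fin]
    have h1 : (0:ℝ) ≤ N c := by simp only [hN]; exact Nat.cast_nonneg _
    have h2 : N c ≤ K := by simp only [hN]; exact_mod_cast hle
    rw [abs_le]
    constructor <;> linarith
  have hdelta : (∑ c : Fin K → Bool, q c * N c) - ∑ c : Fin K → Bool, p c * N c
      ≤ K / 2 * L := by
    have hexp : (∑ c : Fin K → Bool, q c * N c) - (∑ c : Fin K → Bool, p c * N c)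
        = ∑ c : Fin K → Bool, (q c - p c) * (N c - K / 2) := by
      have : ∀ c : Fin K → Bool, (q c - p c) * (N c - K / 2)
          = (q c * N c - p c * N c) - (K / 2) * (q c - p c) := fun c => by ring
      rw [Finset.sum_congr rfl (fun c _ => this c), Finset.sum_sub_distrib,
          Finset.sum_sub_distrib, ← Finset.mul_sum, Finset.sum_sub_distrib, hsump, hsumq]
      ring
    rw [hexp]
    calc ∑ c : Fin K → Bool, (q c - p c) * (N c - K / 2)
        ≤ ∑ c : Fin K → Bool, |(q c - p c) * (N c - K / 2)| :=
          Finset.sum_le_sum (fun c _ => le_abs_self _)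
      _ = ∑ c : Fin K → Bool, |q c - p c| * |N c - K / 2| := by
          apply Finset.sum_congr rfl
          intro c _
          rw [abs_mul]
      _ ≤ ∑ c : Fin K → Bool, |q c - p c| * (K / 2) :=
          Finset.sum_le_sum (fun c _ => mul_le_mul_of_nonneg_left (hNb c) (abs_nonneg _))
      _ = K / 2 * L := by
          rw [hL, ← Finset.sum_mul]
          have : ∀ c : Fin K → Bool, |q c - p c| = |p c - q c| := fun c => abs_sub_comm _ _
          rw [Finset.sum_congr rfl (fun c _ => this c)]
          ring
  have hKpos : (0:ℝ) ≤ (K:ℝ) / 2 := by positivity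
  have hfinal : K / 2 * L ≤ ε * K * Real.sqrt (E / B) := by
    calc (K:ℝ) / 2 * L ≤ K / 2 * (2 * ε * Real.sqrt (E / B)) :=
          mul_le_mul_of_nonneg_left hLle hKpos
      _ = ε * K * Real.sqrt (E / B) := by ring
  have hgoal : (∑ c : Fin K → Bool, q c * N c)
      ≤ (∑ c : Fin K → Bool, p c * N c) + ε * K * Real.sqrt (E / B) := by linarith
  rw [hE] at hgoal
  simpa only [hN] using hgoal
end

section
/- Suppose in addition that |A| ≥ 2. Then for every deterministic learner as defined in the context, ε · (K − (1/|A|) Σ_{a∈A} E_{P_a}[N_a]) ≥ ε K (1/2 − ε √(K / (|A| B))). Equivalently, since under P_a the learner's expected regret (its expected total cost minus K times the optimal per-episode expected cost B) equals ε (K − E_{P_a}[N_a]), the expected regret averaged over a special action a chosen uniformly at random from A is at least ε K (1/2 − ε √(K / (|A| B))). -/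
open Finset

/-! ### Auxiliary combinatorial lemmas -/

private lemma sum_snoc_aux {K : ℕ} (F : (Fin (K + 1) → Bool) → ℝ) :
    ∑ c : Fin (K + 1) → Bool, F c = ∑ d : Fin K → Bool, ∑ b : Bool, F (Fin.snoc d b) := by
  have e := Fintype.sum_equiv (Fin.snocEquiv fun _ => Bool)
    (fun p : Bool × (Fin K → Bool) => F (Fin.snoc p.2 p.1)) F (fun p => rfl)
  rw [← e, Fintype.sum_prod_type, Finset.sum_comm]

private noncomputable def pgen {K : ℕ} (θ : (k : Fin K) → (Fin (k : ℕ) → Bool) → ℝ)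
    (c : Fin K → Bool) : ℝ :=
  ∏ k : Fin K, (if c k then θ k (fun i => c ⟨(i : ℕ), i.isLt.trans k.isLt⟩)
    else 1 - θ k (fun i => c ⟨(i : ℕ), i.isLt.trans k.isLt⟩))

private lemma pgen_snoc {K : ℕ} (θ : (k : Fin (K + 1)) → (Fin (k : ℕ) → Bool) → ℝ)
    (d : Fin K → Bool) (b : Bool) :
    pgen θ (Fin.snoc d b)
      = pgen (fun k h => θ k.castSucc h) d *
        (if b then θ (Fin.last K) d else 1 - θ (Fin.last K) d) := by
  unfold pgen
  rw [Fin.prod_univ_castSucc]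
  congr 1
  · refine Finset.prod_congr rfl fun j _ => ?_
    dsimp only
    have h1 : (Fin.snoc d b : Fin (K + 1) → Bool) j.castSucc = d j := by simp
    have h2 : (fun i : Fin ((Fin.castSucc j : Fin (K + 1)) : ℕ) =>
          (Fin.snoc d b : Fin (K + 1) → Bool) ⟨(i : ℕ), i.isLt.trans (Fin.castSucc j).isLt⟩)
        = (fun i : Fin ((Fin.castSucc j : Fin (K + 1)) : ℕ) =>
          d ⟨(i : ℕ), lt_trans i.isLt j.isLt⟩) := by
      funext i
      show (Fin.snoc d b : Fin (K + 1) → Bool) (Fin.castSucc ⟨(i : ℕ), lt_trans i.isLt j.isLt⟩) = _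
      rw [Fin.snoc_castSucc]
    rw [h1, h2]
    rfl
  · have h3 : (fun i : Fin ((Fin.last K : Fin (K + 1)) : ℕ) =>
          (Fin.snoc d b : Fin (K + 1) → Bool) ⟨(i : ℕ), i.isLt.trans (Fin.last K).isLt⟩)
        = (fun i : Fin ((Fin.last K : Fin (K + 1)) : ℕ) => d ⟨(i : ℕ), i.isLt⟩) := by
      funext i
      show (Fin.snoc d b : Fin (K + 1) → Bool) (Fin.castSucc ⟨(i : ℕ), i.isLt⟩) = _
      rw [Fin.snoc_castSucc]
    rw [Fin.snoc_last, h3]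
    rfl

private lemma pgen_sum : ∀ (K : ℕ) (θ : (k : Fin K) → (Fin (k : ℕ) → Bool) → ℝ),
    ∑ c : Fin K → Bool, pgen θ c = 1 := by
  intro K
  induction K with
  | zero =>
      intro θ
      rw [Fintype.sum_subsingleton _ (fun i : Fin 0 => i.elim0)]
      simp [pgen]
  | succ K ih =>
      intro θ
      rw [sum_snoc_aux]
      have : ∀ d : Fin K → Bool, ∑ b : Bool, pgen θ (Fin.snoc d b)
          = pgen (fun k h => θ k.castSucc h) d := by
        intro d
        rw [Fintype.sum_bool, pgen_snoc, pgen_snoc]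
        simp only [if_true, if_false, Bool.false_eq_true]
        ring
      simp only [this, ih]

private lemma qp_split_key {K : ℕ} (p : ℝ) (k : Fin K) (G : (Fin (k : ℕ) → Bool) → ℝ)
    (φ : Bool → ℝ) :
    ∑ c : Fin K → Bool, (∏ j, if c j then p else 1 - p) *
        (G (fun i => c ⟨(i : ℕ), i.isLt.trans k.isLt⟩) * φ (c k))
      = (p * φ true + (1 - p) * φ false) *
        ∑ d : {j : Fin K // j ≠ k} → Bool,
          (∏ j, if d j then p else 1 - p) *
            G (fun i => d ⟨⟨(i : ℕ), lt_trans i.isLt k.isLt⟩, Fin.ne_of_lt i.isLt⟩) := by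
  classical
  set e := Equiv.funSplitAt k Bool with he
  set F : (Fin K → Bool) → ℝ := fun c => (∏ j, if c j then p else 1 - p) *
      (G (fun i => c ⟨(i : ℕ), i.isLt.trans k.isLt⟩) * φ (c k)) with hF
  have h1 : ∑ c : Fin K → Bool, F c = ∑ bd : Bool × ({j : Fin K // j ≠ k} → Bool), F (e.symm bd) :=
    Fintype.sum_equiv e F (fun bd => F (e.symm bd)) (fun c => by simp)
  have hval : ∀ (b : Bool) (d : {j : Fin K // j ≠ k} → Bool), e.symm (b, d) k = b := by
    intro b d
    simp [he, Equiv.funSplitAt, Equiv.piSplitAt]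
  have hoff : ∀ (b : Bool) (d : {j : Fin K // j ≠ k} → Bool) (j : Fin K) (hj : j ≠ k),
      e.symm (b, d) j = d ⟨j, hj⟩ := by
    intro b d j hj
    simp [he, Equiv.funSplitAt, Equiv.piSplitAt, dif_neg hj]
  have hpre : ∀ (b : Bool) (d : {j : Fin K // j ≠ k} → Bool),
      (fun i : Fin (k : ℕ) => e.symm (b, d) ⟨(i : ℕ), i.isLt.trans k.isLt⟩)
        = (fun i : Fin (k : ℕ) =>
            d ⟨⟨(i : ℕ), lt_trans i.isLt k.isLt⟩, Fin.ne_of_lt i.isLt⟩) := by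
    intro b d
    funext i
    exact hoff b d _ _
  have hprod : ∀ (b : Bool) (d : {j : Fin K // j ≠ k} → Bool),
      (∏ j, if e.symm (b, d) j then p else 1 - p)
        = (if b then p else 1 - p) * ∏ j : {j : Fin K // j ≠ k}, (if d j then p else 1 - p) := by
    intro b d
    rw [← Finset.mul_prod_erase univ _ (mem_univ k), hval]
    congr 1
    rw [Finset.prod_subtype (p := fun j => j ≠ k) (univ.erase k) (fun j => by simp)
      (fun j => if e.symm (b, d) j then p else 1 - p)]
    exact Finset.prod_congr rfl fun j _ => by rw [hoff b d j j.2]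
  have step : ∀ (b : Bool) (d : {j : Fin K // j ≠ k} → Bool),
      F (e.symm (b, d)) = ((if b then p else 1 - p) * φ b) *
        ((∏ j : {j : Fin K // j ≠ k}, if d j then p else 1 - p) *
          G (fun i => d ⟨⟨(i : ℕ), lt_trans i.isLt k.isLt⟩, Fin.ne_of_lt i.isLt⟩)) := by
    intro b d
    rw [hF]
    dsimp only
    rw [hprod, hval, hpre]
    ring
  rw [h1, Fintype.sum_prod_type]
  simp only [step]
  rw [← Finset.sum_mul_sum]
  congr 1
  rw [Fintype.sum_bool]
  simp

private lemma qp_split {K : ℕ} (p : ℝ) (k : Fin K) (G : (Fin (k : ℕ) → Bool) → ℝ)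
    (φ : Bool → ℝ) :
    ∑ c : Fin K → Bool, (∏ j, if c j then p else 1 - p) *
        (G (fun i => c ⟨(i : ℕ), i.isLt.trans k.isLt⟩) * φ (c k))
      = (p * φ true + (1 - p) * φ false) *
        ∑ c : Fin K → Bool, (∏ j, if c j then p else 1 - p) *
          G (fun i => c ⟨(i : ℕ), i.isLt.trans k.isLt⟩) := by
  have k1 := qp_split_key p k G φ
  have k2 := qp_split_key p k G (fun _ => 1)
  simp only [mul_one] at k2
  rw [k1, k2]
  ring

/-! ### Analytic lemmas -/

private lemma log_sum_ineq {ι : Type*} (s : Finset ι) (hs : s.Nonempty) (a b : ι → ℝ)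
    (ha : ∀ i ∈ s, 0 < a i) (hb : ∀ i ∈ s, 0 < b i) :
    (∑ i ∈ s, a i) * Real.log ((∑ i ∈ s, a i) / (∑ i ∈ s, b i))
      ≤ ∑ i ∈ s, a i * Real.log (a i / b i) := by
  set A := ∑ i ∈ s, a i with hA
  set Bs := ∑ i ∈ s, b i with hBs
  have hA0 : 0 < A := Finset.sum_pos ha hs
  have hB0 : 0 < Bs := Finset.sum_pos hb hs
  have key : ∀ i ∈ s, a i * Real.log (A / Bs) + (a i - b i * (A / Bs))
      ≤ a i * Real.log (a i / b i) := by
    intro i hi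
    have hai := ha i hi
    have hbi := hb i hi
    have hpos : (0:ℝ) < b i * A / (a i * Bs) := by positivity
    have hlog := Real.log_le_sub_one_of_pos hpos
    have e1 : Real.log (b i * A / (a i * Bs))
        = Real.log (b i) + Real.log A - (Real.log (a i) + Real.log Bs) := by
      rw [Real.log_div (by positivity) (by positivity), Real.log_mul hbi.ne' hA0.ne',
        Real.log_mul hai.ne' hB0.ne']
    have e2 : Real.log (a i / b i) = Real.log (a i) - Real.log (b i) :=
      Real.log_div hai.ne' hbi.ne'
    have e3 : Real.log (A / Bs) = Real.log A - Real.log Bs :=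
      Real.log_div hA0.ne' hB0.ne'
    have e4 : a i * (b i * A / (a i * Bs)) = b i * (A / Bs) := by
      field_simp
    rw [e1] at hlog
    rw [e2, e3]
    nlinarith [mul_le_mul_of_nonneg_left hlog hai.le]
  calc A * Real.log (A / Bs)
      = ∑ i ∈ s, (a i * Real.log (A / Bs) + (a i - b i * (A / Bs))) := by
        rw [Finset.sum_add_distrib, Finset.sum_sub_distrib, ← Finset.sum_mul,
          ← Finset.sum_mul, ← hA, ← hBs]
        field_simp
        ring
    _ ≤ ∑ i ∈ s, a i * Real.log (a i / b i) := Finset.sum_le_sum key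

private lemma klBin_ge_two_sq {q x : ℝ} (hq0 : 0 < q) (hq1 : q < 1) (hx0 : 0 < x)
    (hx1 : x < 1) :
    2 * (q - x) ^ 2 ≤ q * Real.log (q / x) + (1 - q) * Real.log ((1 - q) / (1 - x)) := by
  set g : ℝ → ℝ := fun y => -(q * Real.log y) - (1 - q) * Real.log (1 - y) - 2 * (q - y) ^ 2
    with hg
  have hderiv : ∀ y ∈ Set.Ioo (0:ℝ) 1, HasDerivAt g ((y - q) * (1 / (y * (1 - y)) - 4)) y := by
    intro y hy
    have hy0 : y ≠ 0 := hy.1.ne'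
    have hy1 : (1:ℝ) - y ≠ 0 := sub_ne_zero.2 (ne_of_gt hy.2)
    have h1 : HasDerivAt (fun y : ℝ => q * Real.log y) (q * y⁻¹) y :=
      (Real.hasDerivAt_log hy0).const_mul q
    have h2 : HasDerivAt (fun y : ℝ => (1:ℝ) - y) (-1) y := (hasDerivAt_id y).const_sub 1
    have h3 : HasDerivAt (fun y : ℝ => Real.log (1 - y)) ((1 - y)⁻¹ * -1) y :=
      (Real.hasDerivAt_log hy1).comp y h2
    have h4 : HasDerivAt (fun y : ℝ => (1 - q) * Real.log (1 - y)) ((1 - q) * ((1 - y)⁻¹ * -1)) y :=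
      h3.const_mul (1 - q)
    have h5 : HasDerivAt (fun y : ℝ => q - y) (-1) y := (hasDerivAt_id y).const_sub q
    have h6 : HasDerivAt (fun y : ℝ => 2 * (q - y) ^ 2) (2 * (2 * (q - y) ^ 1 * -1)) y :=
      (h5.pow 2).const_mul 2
    have h7 := (h1.neg.sub h4).sub h6
    refine h7.congr_deriv ?_
    have hyy : y * (1 - y) ≠ 0 := by
      intro hc
      rcases mul_eq_zero.1 hc with h | h
      · exact hy0 h
      · exact hy1 h
    rw [one_div, mul_inv]
    have E1 : y * y⁻¹ = 1 := mul_inv_cancel₀ hy0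
    have E2 : (1 - y) * (1 - y)⁻¹ = 1 := mul_inv_cancel₀ hy1
    linear_combination -(1 - q) * (1 - y)⁻¹ * E1 + q * y⁻¹ * E2
  have key : g q ≤ g x := by
    rcases le_total q x with hle | hle
    · have hmono : MonotoneOn g (Set.Icc q x) := by
        apply monotoneOn_of_deriv_nonneg (convex_Icc q x)
        · intro y hy
          refine ((hderiv y ?_).continuousAt).continuousWithinAt
          exact ⟨lt_of_lt_of_le hq0 hy.1, lt_of_le_of_lt hy.2 hx1⟩
        · intro y hy
          rw [interior_Icc] at hy
          exact ((hderiv y ⟨lt_trans hq0 hy.1, lt_trans hy.2 hx1⟩).differentiableAt).differentiableWithinAt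
        · intro y hy
          rw [interior_Icc] at hy
          have hy' : y ∈ Set.Ioo (0:ℝ) 1 := ⟨lt_trans hq0 hy.1, lt_trans hy.2 hx1⟩
          rw [(hderiv y hy').deriv]
          have h8 : 0 < y * (1 - y) := mul_pos hy'.1 (by linarith [hy'.2])
          have h9 : y * (1 - y) ≤ 1 / 4 := by nlinarith [sq_nonneg (2 * y - 1)]
          have h10 : (4:ℝ) ≤ 1 / (y * (1 - y)) := by
            rw [le_div_iff₀ h8]; linarith
          have h11 : 0 ≤ y - q := by linarith [hy.1]
          nlinarith
      exact hmono (Set.left_mem_Icc.2 hle) (Set.right_mem_Icc.2 hle) hle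
    · have hmono : AntitoneOn g (Set.Icc x q) := by
        apply antitoneOn_of_deriv_nonpos (convex_Icc x q)
        · intro y hy
          refine ((hderiv y ?_).continuousAt).continuousWithinAt
          exact ⟨lt_of_lt_of_le hx0 hy.1, lt_of_le_of_lt hy.2 hq1⟩
        · intro y hy
          rw [interior_Icc] at hy
          exact ((hderiv y ⟨lt_trans hx0 hy.1, lt_trans hy.2 hq1⟩).differentiableAt).differentiableWithinAt
        · intro y hy
          rw [interior_Icc] at hy
          have hy' : y ∈ Set.Ioo (0:ℝ) 1 := ⟨lt_trans hx0 hy.1, lt_trans hy.2 hq1⟩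
          rw [(hderiv y hy').deriv]
          have h8 : 0 < y * (1 - y) := mul_pos hy'.1 (by linarith [hy'.2])
          have h9 : y * (1 - y) ≤ 1 / 4 := by nlinarith [sq_nonneg (2 * y - 1)]
          have h10 : (4:ℝ) ≤ 1 / (y * (1 - y)) := by
            rw [le_div_iff₀ h8]; linarith
          have h11 : y - q ≤ 0 := by linarith [hy.2]
          nlinarith
      exact hmono (Set.left_mem_Icc.2 hle) (Set.right_mem_Icc.2 hle) hle
  have key' : -(q * Real.log q) - (1 - q) * Real.log (1 - q) - 2 * (q - q) ^ 2
      ≤ -(q * Real.log x) - (1 - q) * Real.log (1 - x) - 2 * (q - x) ^ 2 := key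
  rw [Real.log_div hq0.ne' hx0.ne', Real.log_div (by linarith : ((1:ℝ) - q) ≠ 0)
    (by linarith : ((1:ℝ) - x) ≠ 0)]
  nlinarith [key']

private lemma kl_le_chi2 {v w : ℝ} (hw0 : 0 < w) (hw1 : w < 1) (hv0 : 0 < v) (hv1 : v < 1) :
    v * Real.log (v / w) + (1 - v) * Real.log ((1 - v) / (1 - w))
      ≤ (v - w) ^ 2 / (w * (1 - w)) := by
  have h1 : Real.log (v / w) ≤ v / w - 1 := Real.log_le_sub_one_of_pos (by positivity)
  have h2 : Real.log ((1 - v) / (1 - w)) ≤ (1 - v) / (1 - w) - 1 :=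
    Real.log_le_sub_one_of_pos (div_pos (by linarith) (by linarith))
  have e1 : v * (v / w - 1) + (1 - v) * ((1 - v) / (1 - w) - 1) = (v - w) ^ 2 / (w * (1 - w)) := by
    have hw' : (1:ℝ) - w ≠ 0 := ne_of_gt (by linarith : (0:ℝ) < 1 - w)
    rw [eq_div_iff (ne_of_gt (mul_pos hw0 (by linarith : (0:ℝ) < 1 - w)))]
    field_simp [hw0.ne', hw']
    ring
  nlinarith [mul_le_mul_of_nonneg_left h1 hv0.le,
    mul_le_mul_of_nonneg_left h2 (by linarith : (0:ℝ) ≤ 1 - v)]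

private lemma pinsker_discrete {ι : Type*} [Fintype ι] (P Q : ι → ℝ)
    (hP : ∀ i, 0 < P i) (hQ : ∀ i, 0 < Q i)
    (hP1 : ∑ i, P i = 1) (hQ1 : ∑ i, Q i = 1) :
    ∑ i, max (P i - Q i) 0 ≤ Real.sqrt ((∑ i, Q i * Real.log (Q i / P i)) / 2) := by
  classical
  have hKL0 : 0 ≤ ∑ i, Q i * Real.log (Q i / P i) := by
    have key : ∀ i : ι, Q i - P i ≤ Q i * Real.log (Q i / P i) := by
      intro i
      have h1 : Real.log (P i / Q i) ≤ P i / Q i - 1 :=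
        Real.log_le_sub_one_of_pos (div_pos (hP i) (hQ i))
      have h2 : Real.log (Q i / P i) = -Real.log (P i / Q i) := by
        rw [← Real.log_inv, inv_div]
      have h3 : 1 - P i / Q i ≤ Real.log (Q i / P i) := by rw [h2]; linarith
      have h4 : Q i * (1 - P i / Q i) = Q i - P i := by
        field_simp [(hQ i).ne']
      nlinarith [mul_le_mul_of_nonneg_left h3 (hQ i).le]
    calc (0:ℝ) = ∑ i, (Q i - P i) := by rw [Finset.sum_sub_distrib, hP1, hQ1]; ring
      _ ≤ _ := Finset.sum_le_sum fun i _ => key i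
  set S : Finset ι := univ.filter fun i => P i ≤ Q i with hS
  set S' : Finset ι := univ.filter (fun i => ¬ P i ≤ Q i) with hS'
  set q := ∑ i ∈ S, Q i with hq
  set p := ∑ i ∈ S, P i with hp
  have hsplitQ : q + ∑ i ∈ S', Q i = 1 := by
    rw [hq, hS, hS', Finset.sum_filter_add_sum_filter_not, hQ1]
  have hsplitP : p + ∑ i ∈ S', P i = 1 := by
    rw [hp, hS, hS', Finset.sum_filter_add_sum_filter_not, hP1]
  have hTV : ∑ i, max (P i - Q i) 0 = q - p := by
    rw [← Finset.sum_filter_add_sum_filter_not univ (fun i => P i ≤ Q i)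
      (fun i => max (P i - Q i) 0)]
    have e1 : ∑ i ∈ S, max (P i - Q i) 0 = 0 :=
      Finset.sum_eq_zero fun i hi => max_eq_right (sub_nonpos.2 (Finset.mem_filter.1 hi).2)
    have e2 : ∑ i ∈ S', max (P i - Q i) 0 = ∑ i ∈ S', (P i - Q i) :=
      Finset.sum_congr rfl fun i hi => max_eq_left
        (sub_nonneg.2 (le_of_lt (lt_of_not_ge (Finset.mem_filter.1 hi).2)))
    rw [← hS, ← hS', e1, e2, Finset.sum_sub_distrib]
    linarith
  rcases Finset.eq_empty_or_nonempty S' with hSe | hSne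
  · have h1 : q = 1 := by have := hsplitQ; rw [hSe] at this; simpa using this
    have h2 : p = 1 := by have := hsplitP; rw [hSe] at this; simpa using this
    rw [hTV, h1, h2]
    simp only [sub_self]
    positivity
  rcases Finset.eq_empty_or_nonempty S with hSe | hSne'
  · have hq0 : q = 0 := by rw [hq, hSe]; simp
    have hp0 : p = 0 := by rw [hp, hSe]; simp
    rw [hTV, hq0, hp0]
    simp only [sub_self]
    positivity
  have hq0 : 0 < q := Finset.sum_pos (fun i _ => hQ i) hSne'
  have hp0 : 0 < p := Finset.sum_pos (fun i _ => hP i) hSne'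
  have hq1 : q < 1 := by
    have : 0 < ∑ i ∈ S', Q i := Finset.sum_pos (fun i _ => hQ i) hSne
    linarith
  have hp1 : p < 1 := by
    have : 0 < ∑ i ∈ S', P i := Finset.sum_pos (fun i _ => hP i) hSne
    linarith
  have hpq : p ≤ q := Finset.sum_le_sum fun i hi => (Finset.mem_filter.1 hi).2
  have hKL : q * Real.log (q / p) + (1 - q) * Real.log ((1 - q) / (1 - p))
      ≤ ∑ i, Q i * Real.log (Q i / P i) := by
    have l1 := log_sum_ineq S hSne' Q P (fun i _ => hQ i) (fun i _ => hP i)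
    have l2 := log_sum_ineq S' hSne Q P (fun i _ => hQ i) (fun i _ => hP i)
    have e3 : ∑ i ∈ S', Q i = 1 - q := by linarith
    have e4 : ∑ i ∈ S', P i = 1 - p := by linarith
    rw [e3, e4] at l2
    rw [← Finset.sum_filter_add_sum_filter_not univ (fun i => P i ≤ Q i)
      (fun i => Q i * Real.log (Q i / P i)), ← hS, ← hS']
    exact add_le_add l1 l2
  have h2sq := klBin_ge_two_sq hq0 hq1 hp0 hp1
  rw [hTV]
  rw [Real.le_sqrt (by linarith) (by linarith)]
  nlinarith

/-! ### The KL identity -/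

private lemma kl_identity {K : ℕ} {A : Type*} [DecidableEq A] {B ε : ℝ}
    (hB0 : 0 < B) (hB1 : B < 1) (hp0 : 0 < B + ε) (hp1 : B + ε < 1)
    (f : (k : Fin K) → (Fin (k : ℕ) → Bool) → A) (a : A) :
    ∑ c : Fin K → Bool, (∏ j, if c j then B + ε else 1 - (B + ε)) *
        Real.log ((∏ j, if c j then B + ε else 1 - (B + ε)) / probSpecial B ε f a c)
      = ((B + ε) * Real.log ((B + ε) / B) +
          (1 - (B + ε)) * Real.log ((1 - (B + ε)) / (1 - B))) *
        ∑ c : Fin K → Bool, (∏ j, if c j then B + ε else 1 - (B + ε)) *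
          (learnerCount f a c : ℝ) := by
  classical
  have step1 : ∀ c : Fin K → Bool,
      Real.log ((∏ j, if c j then B + ε else 1 - (B + ε)) / probSpecial B ε f a c)
        = ∑ k : Fin K, (if learnerAct f c k = a then (1:ℝ) else 0) *
            Real.log ((if c k then B + ε else 1 - (B + ε)) / (if c k then B else 1 - B)) := by
    intro c
    have hratio : (∏ j, if c j then B + ε else 1 - (B + ε)) / probSpecial B ε f a c
        = ∏ k : Fin K, ((if c k then B + ε else 1 - (B + ε)) /
            (if c k then (if learnerAct f c k = a then B else B + ε)
             else 1 - (if learnerAct f c k = a then B else B + ε))) := by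
      rw [probSpecial, ← Finset.prod_div_distrib]
    rw [hratio, Real.log_prod]
    · refine Finset.sum_congr rfl fun k _ => ?_
      by_cases h : learnerAct f c k = a <;> by_cases hc : c k <;>
        simp [h, hc, div_self (ne_of_gt hp0),
          div_self (ne_of_gt (by linarith : (0:ℝ) < 1 - (B + ε)))]
    · intro k _
      have h1 : (0:ℝ) < (if c k then B + ε else 1 - (B + ε)) := by
        split <;> linarith
      have h2 : (0:ℝ) < (if c k then (if learnerAct f c k = a then B else B + ε)
          else 1 - (if learnerAct f c k = a then B else B + ε)) := by
        split <;> split <;> linarith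
      exact ne_of_gt (div_pos h1 h2)
  simp only [step1, Finset.mul_sum, learnerAct]
  rw [Finset.sum_comm]
  have hsplit : ∀ k : Fin K,
      ∑ c : Fin K → Bool, (∏ j, if c j then B + ε else 1 - (B + ε)) *
          ((if f k (fun i => c ⟨(i : ℕ), i.isLt.trans k.isLt⟩) = a then (1:ℝ) else 0) *
            Real.log ((if c k then B + ε else 1 - (B + ε)) / (if c k then B else 1 - B)))
        = ((B + ε) * Real.log ((B + ε) / B) +
            (1 - (B + ε)) * Real.log ((1 - (B + ε)) / (1 - B))) *
          ∑ c : Fin K → Bool, (∏ j, if c j then B + ε else 1 - (B + ε)) *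
            (if f k (fun i => c ⟨(i : ℕ), i.isLt.trans k.isLt⟩) = a then (1:ℝ) else 0) := by
    intro k
    have h := qp_split (B + ε) k
      (fun h' => if f k h' = a then (1:ℝ) else 0)
      (fun b => Real.log ((if b then B + ε else 1 - (B + ε)) / (if b then B else 1 - B)))
    simpa using h
  erw [Finset.sum_congr rfl fun k _ => hsplit k]
  rw [← Finset.mul_sum]
  rw [Finset.sum_comm]
  rw [Finset.mul_sum]
  refine Finset.sum_congr rfl fun c _ => ?_
  rw [← Finset.mul_sum]
  congr 2
  rw [learnerCount, Finset.card_filter]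
  push_cast
  simp only [learnerAct]
  rfl

/-! ### Main theorem -/

/-- Lower bound on the expected regret of any deterministic learner, averaged over a
uniformly random special action:
`ε (K − (1/|A|) ∑_a E_{P_a}[N_a]) ≥ ε K (1/2 − ε √(K/(|A| B)))`. -/
theorem regret_lower_bound {K : ℕ} (hK : 1 ≤ K)
    {A : Type*} [Fintype A] [DecidableEq A] (hA : 2 ≤ Fintype.card A)
    (B ε : ℝ) (hB0 : 0 < B) (hB : B ≤ 1 / 2) (hε0 : 0 < ε) (hε : ε < 1 / 8)
    (f : (k : Fin K) → (Fin (k : ℕ) → Bool) → A) :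
    ε * ((K : ℝ) -
        (1 / (Fintype.card A : ℝ)) *
          ∑ a : A, ∑ c : Fin K → Bool, probSpecial B ε f a c * (learnerCount f a c : ℝ)) ≥
      ε * (K : ℝ) *
        (1 / 2 - ε * Real.sqrt ((K : ℝ) / ((Fintype.card A : ℝ) * B))) := by
  classical
  have hn2 : (2:ℝ) ≤ (Fintype.card A : ℝ) := by exact_mod_cast hA
  have hn0 : (0:ℝ) < (Fintype.card A : ℝ) := by linarith
  have hp0 : (0:ℝ) < B + ε := by linarith
  have hp1 : B + ε < 1 := by linarith
  have hB1 : B < 1 := by linarith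
  have hK0 : (0:ℝ) < (K : ℝ) := by exact_mod_cast hK
  have hQpos : ∀ c : Fin K → Bool, 0 < ∏ j, (if c j then B + ε else 1 - (B + ε)) :=
    fun c => Finset.prod_pos fun j _ => by split <;> linarith
  have hQsum : ∑ c : Fin K → Bool, ∏ j, (if c j then B + ε else 1 - (B + ε)) = 1 :=
    pgen_sum K fun _ _ => B + ε
  have hPpos : ∀ (a : A) (c : Fin K → Bool), 0 < probSpecial B ε f a c := by
    intro a c
    rw [probSpecial]
    refine Finset.prod_pos fun k _ => ?_
    split
    · split <;> linarith
    · split <;> linarith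
  have hPsum : ∀ a : A, ∑ c : Fin K → Bool, probSpecial B ε f a c = 1 := fun a =>
    pgen_sum K fun (k : Fin K) (h : Fin (k : ℕ) → Bool) => if f k h = a then B else B + ε
  have hNle : ∀ (a : A) (c : Fin K → Bool), (learnerCount f a c : ℝ) ≤ (K : ℝ) := by
    intro a c
    have h1 : learnerCount f a c ≤ K := by
      rw [learnerCount]
      calc (univ.filter fun k => learnerAct f c k = a).card ≤ (univ : Finset (Fin K)).card :=
            Finset.card_filter_le _ _
        _ = K := by simp
    exact_mod_cast h1
  -- the mean counts under Q
  set m : A → ℝ := fun a => ∑ c : Fin K → Bool,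
    (∏ j, if c j then B + ε else 1 - (B + ε)) * (learnerCount f a c : ℝ) with hm
  have hm0 : ∀ a, 0 ≤ m a := fun a =>
    Finset.sum_nonneg fun c _ => mul_nonneg (hQpos c).le (Nat.cast_nonneg _)
  have hmsum : ∑ a, m a = (K : ℝ) := by
    rw [hm]
    rw [Finset.sum_comm]
    have h1 : ∀ c : Fin K → Bool,
        ∑ a, (∏ j, if c j then B + ε else 1 - (B + ε)) * (learnerCount f a c : ℝ)
          = (∏ j, if c j then B + ε else 1 - (B + ε)) * (K : ℝ) := by
      intro c
      rw [← Finset.mul_sum]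
      congr 1
      have hcard : ∑ a, learnerCount f a c = K := by
        have h2 := Finset.card_eq_sum_card_fiberwise
          (f := fun k : Fin K => learnerAct f c k) (s := univ) (t := univ)
          (fun k _ => Finset.mem_univ _)
        simp only [Finset.card_univ, Fintype.card_fin] at h2
        simp only [learnerCount]
        exact h2.symm
      exact_mod_cast hcard
    rw [Finset.sum_congr rfl fun c _ => h1 c, ← Finset.sum_mul, hQsum, one_mul]
  -- per-arm bound
  have key : ∀ a : A, ∑ c : Fin K → Bool, probSpecial B ε f a c * (learnerCount f a c : ℝ)
      ≤ m a + (K : ℝ) * (ε * Real.sqrt (m a / B)) := by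
    intro a
    have hTV := pinsker_discrete (probSpecial B ε f a)
      (fun c => ∏ j, if c j then B + ε else 1 - (B + ε))
      (hPpos a) hQpos (hPsum a) hQsum
    have hKLid := kl_identity hB0 hB1 hp0 hp1 f a
    have hklbound : (B + ε) * Real.log ((B + ε) / B) +
        (1 - (B + ε)) * Real.log ((1 - (B + ε)) / (1 - B)) ≤ 2 * ε ^ 2 / B := by
      have h1 := kl_le_chi2 (v := B + ε) (w := B) hB0 hB1 hp0 hp1
      have h2 : ((B + ε) - B) ^ 2 / (B * (1 - B)) ≤ 2 * ε ^ 2 / B := by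
        rw [show ((B + ε) - B) = ε by ring,
          div_le_div_iff₀ (mul_pos hB0 (by linarith : (0:ℝ) < 1 - B)) hB0]
        nlinarith [mul_nonneg (mul_nonneg (sq_nonneg ε) hB0.le)
          (by linarith : (0:ℝ) ≤ 1 - 2 * B)]
      linarith
    have hKLle : (∑ c : Fin K → Bool, (∏ j, if c j then B + ε else 1 - (B + ε)) *
          Real.log ((∏ j, if c j then B + ε else 1 - (B + ε)) / probSpecial B ε f a c)) / 2
        ≤ ε ^ 2 * (m a / B) := by
      rw [hKLid]
      have h12 : ∑ c : Fin K → Bool, (∏ j, if c j then B + ε else 1 - (B + ε)) *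
          (learnerCount f a c : ℝ) = m a := rfl
      rw [h12]
      have h3 := mul_le_mul_of_nonneg_right hklbound (hm0 a)
      have h4 : (2 * ε ^ 2 / B) * m a / 2 = ε ^ 2 * (m a / B) := by
        field_simp
      calc _ ≤ (2 * ε ^ 2 / B) * m a / 2 := by linarith
        _ = ε ^ 2 * (m a / B) := h4
    have hsq : Real.sqrt ((∑ c : Fin K → Bool, (∏ j, if c j then B + ε else 1 - (B + ε)) *
          Real.log ((∏ j, if c j then B + ε else 1 - (B + ε)) / probSpecial B ε f a c)) / 2)
        ≤ ε * Real.sqrt (m a / B) := by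
      have h5 : Real.sqrt (ε ^ 2 * (m a / B)) = ε * Real.sqrt (m a / B) := by
        rw [Real.sqrt_mul (sq_nonneg ε), Real.sqrt_sq hε0.le]
      rw [← h5]
      exact Real.sqrt_le_sqrt hKLle
    have hstep : ∑ c : Fin K → Bool, probSpecial B ε f a c * (learnerCount f a c : ℝ)
        ≤ m a + (K : ℝ) * ∑ c : Fin K → Bool,
            max (probSpecial B ε f a c - (∏ j, if c j then B + ε else 1 - (B + ε))) 0 := by
      have e0 : ∑ c : Fin K → Bool, probSpecial B ε f a c * (learnerCount f a c : ℝ)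
          = m a + ∑ c : Fin K → Bool,
              (probSpecial B ε f a c - (∏ j, if c j then B + ε else 1 - (B + ε))) *
                (learnerCount f a c : ℝ) := by
        rw [hm, ← Finset.sum_add_distrib]
        refine Finset.sum_congr rfl fun c _ => ?_
        ring
      have e1 : ∀ c : Fin K → Bool,
          (probSpecial B ε f a c - (∏ j, if c j then B + ε else 1 - (B + ε))) *
              (learnerCount f a c : ℝ)
            ≤ max (probSpecial B ε f a c - (∏ j, if c j then B + ε else 1 - (B + ε))) 0
              * (K : ℝ) := by
        intro c
        rcases le_or_gt 0 (probSpecial B ε f a c - (∏ j, if c j then B + ε else 1 - (B + ε)))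
          with h | h
        · rw [max_eq_left h]
          exact mul_le_mul_of_nonneg_left (hNle a c) h
        · calc _ ≤ (0:ℝ) := mul_nonpos_of_nonpos_of_nonneg h.le (Nat.cast_nonneg _)
            _ ≤ _ := mul_nonneg (le_max_right _ _) hK0.le
      calc ∑ c : Fin K → Bool, probSpecial B ε f a c * (learnerCount f a c : ℝ)
          = m a + ∑ c : Fin K → Bool,
              (probSpecial B ε f a c - (∏ j, if c j then B + ε else 1 - (B + ε))) *
                (learnerCount f a c : ℝ) := e0
        _ ≤ m a + ∑ c : Fin K → Bool,
              max (probSpecial B ε f a c - (∏ j, if c j then B + ε else 1 - (B + ε))) 0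
                * (K : ℝ) := by
            exact add_le_add_right (Finset.sum_le_sum fun c _ => e1 c) _
        _ = m a + (K : ℝ) * ∑ c : Fin K → Bool,
              max (probSpecial B ε f a c - (∏ j, if c j then B + ε else 1 - (B + ε))) 0 := by
            rw [← Finset.sum_mul, mul_comm]
    calc ∑ c : Fin K → Bool, probSpecial B ε f a c * (learnerCount f a c : ℝ)
        ≤ m a + (K : ℝ) * ∑ c : Fin K → Bool,
            max (probSpecial B ε f a c - (∏ j, if c j then B + ε else 1 - (B + ε))) 0 := hstep
      _ ≤ m a + (K : ℝ) * (ε * Real.sqrt (m a / B)) := by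
          refine add_le_add_right (mul_le_mul_of_nonneg_left ?_ hK0.le) _
          exact le_trans hTV hsq
  -- Cauchy–Schwarz
  have hCS : ∑ a, Real.sqrt (m a) ≤ Real.sqrt ((Fintype.card A : ℝ) * (K : ℝ)) := by
    have h1 := Finset.sum_mul_sq_le_sq_mul_sq univ (fun a => Real.sqrt (m a)) (fun _ => (1:ℝ))
    simp only [mul_one, one_pow] at h1
    have h2 : ∑ a, Real.sqrt (m a) ^ 2 = (K : ℝ) := by
      rw [Finset.sum_congr rfl fun a _ => Real.sq_sqrt (hm0 a), hmsum]
    have h3 : (∑ _a : A, (1:ℝ)) = (Fintype.card A : ℝ) := by simp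
    rw [h2, h3] at h1
    rw [Real.le_sqrt (Finset.sum_nonneg fun a _ => Real.sqrt_nonneg _) (by positivity)]
    nlinarith [h1]
  -- summing the per-arm bounds
  have hsumP : ∑ a : A, ∑ c : Fin K → Bool, probSpecial B ε f a c * (learnerCount f a c : ℝ)
      ≤ (K : ℝ) + (K : ℝ) * ε *
          (Real.sqrt ((Fintype.card A : ℝ) * (K : ℝ)) / Real.sqrt B) := by
    calc ∑ a : A, ∑ c : Fin K → Bool, probSpecial B ε f a c * (learnerCount f a c : ℝ)
        ≤ ∑ a, (m a + (K : ℝ) * (ε * Real.sqrt (m a / B))) :=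
          Finset.sum_le_sum fun a _ => key a
      _ = (K : ℝ) + (K : ℝ) * ε * ((∑ a, Real.sqrt (m a)) / Real.sqrt B) := by
          have e : ∀ a ∈ (univ : Finset A), (K : ℝ) * (ε * Real.sqrt (m a / B))
              = (K : ℝ) * ε * (Real.sqrt (m a) / Real.sqrt B) := by
            intro a _
            rw [Real.sqrt_div (hm0 a) B]
            ring
          rw [Finset.sum_add_distrib, hmsum, Finset.sum_congr rfl e, ← Finset.mul_sum,
            ← Finset.sum_div]
      _ ≤ (K : ℝ) + (K : ℝ) * ε *
            (Real.sqrt ((Fintype.card A : ℝ) * (K : ℝ)) / Real.sqrt B) := by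
          gcongr
  -- final arithmetic
  have hsB : (0:ℝ) < Real.sqrt B := Real.sqrt_pos.2 hB0
  have hsn : (0:ℝ) < Real.sqrt (Fintype.card A : ℝ) := Real.sqrt_pos.2 hn0
  have hid : Real.sqrt ((Fintype.card A : ℝ) * (K : ℝ)) / Real.sqrt B / (Fintype.card A : ℝ)
      = Real.sqrt ((K : ℝ) / ((Fintype.card A : ℝ) * B)) := by
    have h6 : Real.sqrt ((Fintype.card A : ℝ) * (K : ℝ))
        = Real.sqrt (Fintype.card A : ℝ) * Real.sqrt (K : ℝ) := Real.sqrt_mul hn0.le _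
    have h7 : Real.sqrt ((K : ℝ) / ((Fintype.card A : ℝ) * B))
        = Real.sqrt (K : ℝ) / (Real.sqrt (Fintype.card A : ℝ) * Real.sqrt B) := by
      rw [Real.sqrt_div (Nat.cast_nonneg K), Real.sqrt_mul hn0.le]
    have h8 : Real.sqrt (Fintype.card A : ℝ) * Real.sqrt (Fintype.card A : ℝ)
        = (Fintype.card A : ℝ) := Real.mul_self_sqrt hn0.le
    rw [h6, h7, ← h8]
    field_simp
    rw [Real.sq_sqrt (sq_nonneg _)]
  have hTle : (1 / (Fintype.card A : ℝ)) *
        (∑ a : A, ∑ c : Fin K → Bool, probSpecial B ε f a c * (learnerCount f a c : ℝ))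
      ≤ (K : ℝ) / 2 + (K : ℝ) * ε * Real.sqrt ((K : ℝ) / ((Fintype.card A : ℝ) * B)) := by
    have h9 : (1 / (Fintype.card A : ℝ)) *
          (∑ a : A, ∑ c : Fin K → Bool, probSpecial B ε f a c * (learnerCount f a c : ℝ))
        ≤ (1 / (Fintype.card A : ℝ)) * ((K : ℝ) + (K : ℝ) * ε *
            (Real.sqrt ((Fintype.card A : ℝ) * (K : ℝ)) / Real.sqrt B)) :=
      mul_le_mul_of_nonneg_left hsumP (by positivity)
    have h10 : (1 / (Fintype.card A : ℝ)) * ((K : ℝ) + (K : ℝ) * ε *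
          (Real.sqrt ((Fintype.card A : ℝ) * (K : ℝ)) / Real.sqrt B))
        = (K : ℝ) / (Fintype.card A : ℝ) + (K : ℝ) * ε *
            (Real.sqrt ((Fintype.card A : ℝ) * (K : ℝ)) / Real.sqrt B / (Fintype.card A : ℝ)) := by
      ring
    have h11 : (K : ℝ) / (Fintype.card A : ℝ) ≤ (K : ℝ) / 2 :=
      div_le_div_of_nonneg_left hK0.le (by norm_num) hn2
    rw [h10, hid] at h9
    linarith
  rw [ge_iff_le]
  nlinarith [mul_le_mul_of_nonneg_left hTle hε0.le]
end
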